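/- arXiv:1103.3118 — 4 statements merged into one kernel-verified Lean document; each statement's English description precedes it below -/
import Mathlib

section
/- Let g be an invertible symmetric real 4×4 matrix. Then the Tamm–Rubilar quartic form of the Hodge star medium tensor *_g satisfies 𝒢_{*_g}(ξ) = sgn(det g) · √|det g| · (g(ξ,ξ))² for all ξ ∈ ℝ⁴. Consequently the Fresnel surface of *_g is exactly the null cone of g on covectors: {ξ ∈ ℝ⁴ : 𝒢_{*_g}(ξ) = 0} = {ξ ∈ ℝ⁴ : g(ξ,ξ) = 0}. -/
open scoped BigOperators
open Matrix

noncomputable section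

/-- The Levi-Civita symbol `ε_{ijkl}` on `{0,1,2,3}`. -/
def eps4 (i j k l : Fin 4) : ℝ :=
  (((j.val : ℝ) - (i.val : ℝ)) * ((k.val : ℝ) - (i.val : ℝ)) * ((l.val : ℝ) - (i.val : ℝ)) *
      ((k.val : ℝ) - (j.val : ℝ)) * ((l.val : ℝ) - (j.val : ℝ)) * ((l.val : ℝ) - (k.val : ℝ))) / 12

/-- A 2-form on ℝ⁴: an antisymmetric array of components. -/
def IsAlt (u : Fin 4 → Fin 4 → ℝ) : Prop := ∀ i j, u i j = - u j i

/-- The components `κ i j k l = κ^{ij}_{kl}` form a medium tensor: antisymmetry in the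
upper pair and in the lower pair. -/
def IsMedium (κ : Fin 4 → Fin 4 → Fin 4 → Fin 4 → ℝ) : Prop :=
  (∀ i j k l, κ i j k l = - κ j i k l) ∧ (∀ i j k l, κ i j k l = - κ i j l k)

/-- Action of a medium tensor on a 2-form: `(κ F)_{ij} = ½ κ^{rs}_{ij} F_{rs}`. -/
def act (κ : Fin 4 → Fin 4 → Fin 4 → Fin 4 → ℝ) (F : Fin 4 → Fin 4 → ℝ) (i j : Fin 4) : ℝ :=
  (1 / 2) * ∑ r, ∑ s, κ r s i j * F r s

/-- Wedge pairing of two 2-forms: `u ∧ v = ¼ ε^{ijkl} u_{ij} v_{kl}`. -/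
def wedge2 (u v : Fin 4 → Fin 4 → ℝ) : ℝ :=
  (1 / 4) * ∑ i, ∑ j, ∑ k, ∑ l, eps4 i j k l * u i j * v k l

/-- A medium tensor is skewon-free if `u ∧ κ(v) = κ(u) ∧ v` for all 2-forms `u, v`. -/
def SkewonFree (κ : Fin 4 → Fin 4 → Fin 4 → Fin 4 → ℝ) : Prop :=
  ∀ u v, IsAlt u → IsAlt v → wedge2 u (act κ v) = wedge2 (act κ u) v

/-- Trace of a medium tensor: `½ κ^{ij}_{ij}`. -/
def mtrace (κ : Fin 4 → Fin 4 → Fin 4 → Fin 4 → ℝ) : ℝ := (1 / 2) * ∑ i, ∑ j, κ i j i j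

/-- The (unsymmetrised) Tamm-Rubilar tensor density `𝒢₀^{ijkl}`. -/
def TR0 (κ : Fin 4 → Fin 4 → Fin 4 → Fin 4 → ℝ) (i j k l : Fin 4) : ℝ :=
  (1 / 48) * ∑ a₁, ∑ a₂, ∑ a₃, ∑ a₄, ∑ b₁, ∑ b₂, ∑ b₃, ∑ b₄, ∑ b₅, ∑ b₆,
    κ a₁ a₂ b₁ b₂ * κ a₃ i b₃ b₄ * κ a₄ j b₅ b₆ *
      eps4 b₁ b₂ b₅ k * eps4 b₃ b₄ b₆ l * eps4 a₁ a₂ a₃ a₄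

/-- The Tamm-Rubilar quartic form `𝒢_κ(ξ) = 𝒢₀^{ijkl} ξ_i ξ_j ξ_k ξ_l`. -/
def TR (κ : Fin 4 → Fin 4 → Fin 4 → Fin 4 → ℝ) (ξ : Fin 4 → ℝ) : ℝ :=
  ∑ i, ∑ j, ∑ k, ∑ l, TR0 κ i j k l * ξ i * ξ j * ξ k * ξ l

/-- The Hodge star medium tensor of an invertible symmetric 4×4 matrix:
`(*_g)^{ij}_{rs} = √|det g| g^{ia} g^{jb} ε_{abrs}`. -/
def hodge (g : Matrix (Fin 4) (Fin 4) ℝ) (i j r s : Fin 4) : ℝ :=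
  Real.sqrt |g.det| * ∑ a, ∑ b, g⁻¹ i a * g⁻¹ j b * eps4 a b r s

/-- Lorentzian signature `(+---)` or `(-+++)` for a symmetric real 4×4 matrix. -/
def IsLorentzian (g : Matrix (Fin 4) (Fin 4) ℝ) : Prop :=
  ∃ P : Matrix (Fin 4) (Fin 4) ℝ, IsUnit P.det ∧
    (Pᵀ * g * P = Matrix.diagonal ![1, -1, -1, -1] ∨
      Pᵀ * g * P = Matrix.diagonal ![-1, 1, 1, 1])

/-- The metric evaluated on covectors: `g(ξ,η) = g^{ij} ξ_i η_j` (inverse matrix entries). -/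
def gform (g : Matrix (Fin 4) (Fin 4) ℝ) (ξ η : Fin 4 → ℝ) : ℝ :=
  ∑ i, ∑ j, g⁻¹ i j * ξ i * η j


-- ===================== auxiliary machinery =====================

namespace TRaux

lemma w0 : ((0:Fin 4) : ℕ) = 0 := rfl
lemma w1 : ((1:Fin 4) : ℕ) = 1 := rfl
lemma w2 : ((2:Fin 4) : ℕ) = 2 := rfl
lemma w3 : ((3:Fin 4) : ℕ) = 3 := rfl

lemma fin4 {P : Fin 4 → Prop} (h0 : P 0) (h1 : P 1) (h2 : P 2) (h3 : P 3) : ∀ x, P x := by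
  intro x
  fin_cases x
  exacts [h0, h1, h2, h3]

/-- The Hodge tensor without the scalar `√|det g|` factor. -/
def Kmat (h : Matrix (Fin 4) (Fin 4) ℝ) (i j r s : Fin 4) : ℝ :=
  ∑ a, ∑ b, h i a * h j b * eps4 a b r s

lemma eps4_anti1 (i j k l : Fin 4) : eps4 j i k l = -eps4 i j k l := by
  unfold eps4; ring

lemma det_fin_four' (A : Matrix (Fin 4) (Fin 4) ℝ) : A.det =
    A 0 0 * A 1 1 * A 2 2 * A 3 3
      - A 0 0 * A 1 1 * A 2 3 * A 3 2
      - A 0 0 * A 1 2 * A 2 1 * A 3 3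
      + A 0 0 * A 1 2 * A 2 3 * A 3 1
      + A 0 0 * A 1 3 * A 2 1 * A 3 2
      - A 0 0 * A 1 3 * A 2 2 * A 3 1
      - A 0 1 * A 1 0 * A 2 2 * A 3 3
      + A 0 1 * A 1 0 * A 2 3 * A 3 2
      + A 0 1 * A 1 2 * A 2 0 * A 3 3
      - A 0 1 * A 1 2 * A 2 3 * A 3 0
      - A 0 1 * A 1 3 * A 2 0 * A 3 2
      + A 0 1 * A 1 3 * A 2 2 * A 3 0
      + A 0 2 * A 1 0 * A 2 1 * A 3 3
      - A 0 2 * A 1 0 * A 2 3 * A 3 1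
      - A 0 2 * A 1 1 * A 2 0 * A 3 3
      + A 0 2 * A 1 1 * A 2 3 * A 3 0
      + A 0 2 * A 1 3 * A 2 0 * A 3 1
      - A 0 2 * A 1 3 * A 2 1 * A 3 0
      - A 0 3 * A 1 0 * A 2 1 * A 3 2
      + A 0 3 * A 1 0 * A 2 2 * A 3 1
      + A 0 3 * A 1 1 * A 2 0 * A 3 2
      - A 0 3 * A 1 1 * A 2 2 * A 3 0
      - A 0 3 * A 1 2 * A 2 0 * A 3 1
      + A 0 3 * A 1 2 * A 2 1 * A 3 0 := by
  rw [Matrix.det_succ_row_zero]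
  simp [Fin.sum_univ_succ, Matrix.det_fin_three, Matrix.submatrix_apply, Fin.succAbove,
    show (Fin.succ 2 : Fin 4) = 3 from rfl, show (Fin.castSucc 2 : Fin 4) = 2 from rfl]
  ring

/-- move the innermost sum of three outside -/
lemma moveout2 (f : Fin 4 → Fin 4 → Fin 4 → ℝ) :
    ∑ x, ∑ y, ∑ b, f x y b = ∑ b, ∑ x, ∑ y, f x y b :=
  (Finset.sum_congr rfl fun _ _ => Finset.sum_comm).trans Finset.sum_comm

lemma moveout4 (f : Fin 4 → Fin 4 → Fin 4 → Fin 4 → Fin 4 → ℝ) :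
    ∑ x, ∑ y, ∑ z, ∑ w, ∑ b, f x y z w b = ∑ b, ∑ x, ∑ y, ∑ z, ∑ w, f x y z w b :=
  ((Finset.sum_congr rfl fun _ _ => (Finset.sum_congr rfl fun _ _ =>
      (Finset.sum_congr rfl fun _ _ => Finset.sum_comm).trans Finset.sum_comm).trans
        Finset.sum_comm).trans Finset.sum_comm)

lemma pull4 (u v : Fin 4 → Fin 4 → ℝ) (C : ℝ) :
    ∑ b1, ∑ b2, ∑ b3, ∑ b4, u b1 b2 * v b3 b4 * C
      = C * (∑ b1, ∑ b2, u b1 b2) * (∑ b3, ∑ b4, v b3 b4) := by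
  have h1 : ∀ b1 b2 : Fin 4, u b1 b2 * ((∑ b3, ∑ b4, v b3 b4) * C)
      = ∑ b3, ∑ b4, u b1 b2 * v b3 b4 * C := by
    intro b1 b2
    rw [show u b1 b2 * ((∑ b3, ∑ b4, v b3 b4) * C)
        = (∑ b3, ∑ b4, v b3 b4) * (u b1 b2 * C) by ring, Finset.sum_mul]
    refine Finset.sum_congr rfl fun b3 _ => ?_
    rw [Finset.sum_mul]
    refine Finset.sum_congr rfl fun b4 _ => by ring
  refine Eq.trans (Finset.sum_congr rfl fun b1 _ => Finset.sum_congr rfl fun b2 _ =>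
    (h1 b1 b2).symm) ?_
  refine Eq.trans (Finset.sum_congr rfl fun b1 _ => (Finset.sum_mul _ _ _).symm) ?_
  rw [← Finset.sum_mul]
  ring

lemma six (f g' h' : Fin 4 → Fin 4 → ℝ) (p' q' : Fin 4 → Fin 4 → Fin 4 → ℝ) (e : ℝ) :
    (∑ b1, ∑ b2, ∑ b3, ∑ b4, ∑ b5, ∑ b6,
        f b1 b2 * g' b3 b4 * h' b5 b6 * p' b1 b2 b5 * q' b3 b4 b6 * e)
      = e * ∑ b5, ∑ b6, h' b5 b6 * (∑ b1, ∑ b2, f b1 b2 * p' b1 b2 b5) *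
          (∑ b3, ∑ b4, g' b3 b4 * q' b3 b4 b6) := by
  refine Eq.trans (Finset.sum_congr rfl fun b1 _ => Finset.sum_congr rfl fun b2 _ =>
    (moveout2 _).trans (Finset.sum_congr rfl fun b5 _ => moveout2 _)) ?_
  refine Eq.trans (moveout2 _) ?_
  refine Eq.trans (Finset.sum_congr rfl fun b5 _ => moveout2 _) ?_
  rw [Finset.mul_sum]
  refine Finset.sum_congr rfl fun b5 _ => ?_
  rw [Finset.mul_sum]
  refine Finset.sum_congr rfl fun b6 _ => ?_
  have reshape : ∀ b1 b2 b3 b4 : Fin 4,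
      f b1 b2 * g' b3 b4 * h' b5 b6 * p' b1 b2 b5 * q' b3 b4 b6 * e
        = (f b1 b2 * p' b1 b2 b5) * (g' b3 b4 * q' b3 b4 b6) * (h' b5 b6 * e) :=
    fun _ _ _ _ => by ring
  simp only [reshape]
  rw [pull4]
  ring

lemma REARR1 (F E : Fin 4 → Fin 4 → Fin 4 → Fin 4 → ℝ) (G H P Q : Fin 4 → Fin 4 → Fin 4 → ℝ) :
    (∑ a1, ∑ a2, ∑ a3, ∑ a4, ∑ b1, ∑ b2, ∑ b3, ∑ b4, ∑ b5, ∑ b6,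
        F a1 a2 b1 b2 * G a3 b3 b4 * H a4 b5 b6 * P b1 b2 b5 * Q b3 b4 b6 * E a1 a2 a3 a4)
      = ∑ a1, ∑ a2, ∑ a3, ∑ a4, E a1 a2 a3 a4 *
          ∑ b5, ∑ b6, H a4 b5 b6 * (∑ b1, ∑ b2, F a1 a2 b1 b2 * P b1 b2 b5) *
            (∑ b3, ∑ b4, G a3 b3 b4 * Q b3 b4 b6) :=
  Finset.sum_congr rfl fun a1 _ => Finset.sum_congr rfl fun a2 _ =>
    Finset.sum_congr rfl fun a3 _ => Finset.sum_congr rfl fun a4 _ =>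
      six (F a1 a2) (G a3) (H a4) P Q (E a1 a2 a3 a4)

lemma REARR2 (E : Fin 4 → Fin 4 → Fin 4 → Fin 4 → ℝ) (S : Fin 4 → Fin 4 → Fin 4 → ℝ)
    (T V : Fin 4 → Fin 4 → ℝ) (W : Fin 4 → ℝ) (U : Fin 4 → Fin 4 → Fin 4 → Fin 4 → ℝ) :
    (∑ a1, ∑ a2, ∑ a3, ∑ a4, E a1 a2 a3 a4 *
        ∑ b5, ∑ b6, (∑ p, ∑ q, V a4 p * W q * U p q b5 b6) * S a1 a2 b5 * T a3 b6)
      = ∑ b5, ∑ b6, ∑ p, ∑ q, W q * U p q b5 b6 *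
          (∑ a1, ∑ a2, ∑ a3, ∑ a4, E a1 a2 a3 a4 * S a1 a2 b5 * T a3 b6 * V a4 p) := by
  simp only [Finset.sum_mul, Finset.mul_sum]
  refine Eq.trans (moveout4 _) ?_
  refine Eq.trans (Finset.sum_congr rfl fun b5 _ => moveout4 _) ?_
  refine Eq.trans (Finset.sum_congr rfl fun b5 _ => Finset.sum_congr rfl fun b6 _ =>
    moveout4 _) ?_
  refine Eq.trans (Finset.sum_congr rfl fun b5 _ => Finset.sum_congr rfl fun b6 _ =>
    Finset.sum_congr rfl fun p _ => moveout4 _) ?_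
  refine Finset.sum_congr rfl fun b5 _ => Finset.sum_congr rfl fun b6 _ =>
    Finset.sum_congr rfl fun p _ => Finset.sum_congr rfl fun q _ =>
      Finset.sum_congr rfl fun a1 _ => Finset.sum_congr rfl fun a2 _ =>
        Finset.sum_congr rfl fun a3 _ => Finset.sum_congr rfl fun a4 _ => by ring

lemma smul3gen (c : ℝ) (A E : Fin 4 → Fin 4 → Fin 4 → Fin 4 → ℝ)
    (B C P Q : Fin 4 → Fin 4 → Fin 4 → ℝ) :
    (∑ a1, ∑ a2, ∑ a3, ∑ a4, ∑ b1, ∑ b2, ∑ b3, ∑ b4, ∑ b5, ∑ b6,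
        (c * A a1 a2 b1 b2) * (c * B a3 b3 b4) * (c * C a4 b5 b6) *
          P b1 b2 b5 * Q b3 b4 b6 * E a1 a2 a3 a4)
      = c ^ 3 * ∑ a1, ∑ a2, ∑ a3, ∑ a4, ∑ b1, ∑ b2, ∑ b3, ∑ b4, ∑ b5, ∑ b6,
          A a1 a2 b1 b2 * B a3 b3 b4 * C a4 b5 b6 *
            P b1 b2 b5 * Q b3 b4 b6 * E a1 a2 a3 a4 := by
  simp only [Finset.mul_sum]
  refine Finset.sum_congr rfl fun _ _ => ?_
  refine Finset.sum_congr rfl fun _ _ => ?_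
  refine Finset.sum_congr rfl fun _ _ => ?_
  refine Finset.sum_congr rfl fun _ _ => ?_
  refine Finset.sum_congr rfl fun _ _ => ?_
  refine Finset.sum_congr rfl fun _ _ => ?_
  refine Finset.sum_congr rfl fun _ _ => ?_
  refine Finset.sum_congr rfl fun _ _ => ?_
  refine Finset.sum_congr rfl fun _ _ => ?_
  refine Finset.sum_congr rfl fun _ _ => ?_
  ring

variable (h : Matrix (Fin 4) (Fin 4) ℝ)

set_option maxHeartbeats 4000000 in
/-- contraction of `K` with one epsilon -/
lemma KC (a₁ a₂ m k : Fin 4) :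
    (∑ b₁, ∑ b₂, Kmat h a₁ a₂ b₁ b₂ * eps4 b₁ b₂ m k)
      = 2 * (h a₁ m * h a₂ k - h a₁ k * h a₂ m) := by
  revert m k
  refine fin4 ?_ ?_ ?_ ?_ <;> refine fin4 ?_ ?_ ?_ ?_ <;>
  · simp only [Fin.sum_univ_four, Kmat, eps4, w0, w1, w2, w3]
    norm_num
    try ring

set_option maxHeartbeats 8000000 in
/-- the determinant contraction -/
lemma D (x y z w : Fin 4) :
    (∑ a1, ∑ a2, ∑ a3, ∑ a4,
        eps4 a1 a2 a3 a4 * h a1 x * h a2 y * h a3 z * h a4 w)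
      = h.det * eps4 x y z w := by
  rw [det_fin_four' h]
  revert x y z w
  simp only [Fin.sum_univ_four, eps4, w0, w1, w2, w3]
  norm_num
  refine fin4 ?_ ?_ ?_ ?_ <;> refine fin4 ?_ ?_ ?_ ?_ <;>
    refine fin4 ?_ ?_ ?_ ?_ <;> refine fin4 ?_ ?_ ?_ ?_ <;>
  · norm_num [w0, w1, w2, w3]
    try ring

set_option maxHeartbeats 4000000 in
lemma DD (i k l b5 b6 p : Fin 4) :
    (∑ a1, ∑ a2, ∑ a3, ∑ a4, eps4 a1 a2 a3 a4 *
        (2 * (h a1 b5 * h a2 k - h a1 k * h a2 b5)) *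
        (2 * (h a3 b6 * h i l - h a3 l * h i b6)) * h a4 p)
      = 8 * h.det * (eps4 b5 k b6 p * h i l - eps4 b5 k l p * h i b6) := by
  have expand : ∀ a1 a2 a3 a4 : Fin 4, eps4 a1 a2 a3 a4 *
        (2 * (h a1 b5 * h a2 k - h a1 k * h a2 b5)) *
        (2 * (h a3 b6 * h i l - h a3 l * h i b6)) * h a4 p
      = h i l * (4 * (eps4 a1 a2 a3 a4 * h a1 b5 * h a2 k * h a3 b6 * h a4 p))
        - h i b6 * (4 * (eps4 a1 a2 a3 a4 * h a1 b5 * h a2 k * h a3 l * h a4 p))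
        - h i l * (4 * (eps4 a1 a2 a3 a4 * h a1 k * h a2 b5 * h a3 b6 * h a4 p))
        + h i b6 * (4 * (eps4 a1 a2 a3 a4 * h a1 k * h a2 b5 * h a3 l * h a4 p)) :=
    fun _ _ _ _ => by ring
  simp only [expand, Finset.sum_add_distrib, Finset.sum_sub_distrib, ← Finset.mul_sum]
  rw [D h b5 k b6 p, D h b5 k l p, D h k b5 b6 p, D h k b5 l p,
    eps4_anti1 b5 k b6 p, eps4_anti1 b5 k l p]
  ring

set_option maxHeartbeats 8000000 in
lemma FIN (i j k l : Fin 4) :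
    (∑ b5, ∑ b6, ∑ p, ∑ q, h j q * eps4 p q b5 b6 *
        (8 * h.det * (eps4 b5 k b6 p * h i l - eps4 b5 k l p * h i b6)))
      = 48 * h.det * (2/3 * h i l * h j k + 1/3 * h i k * h j l) := by
  revert k l
  refine fin4 ?_ ?_ ?_ ?_ <;> refine fin4 ?_ ?_ ?_ ?_ <;>
  · simp only [Fin.sum_univ_four, eps4, w0, w1, w2, w3]
    norm_num
    try ring

end TRaux

open TRaux in
set_option maxHeartbeats 4000000 in
lemma TR0_hodge (g : Matrix (Fin 4) (Fin 4) ℝ) (i j k l : Fin 4) :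
    TR0 (hodge g) i j k l = (Real.sqrt |g.det|) ^ 3 * (g⁻¹).det *
      (2/3 * g⁻¹ i l * g⁻¹ j k + 1/3 * g⁻¹ i k * g⁻¹ j l) := by
  have hK : hodge g = fun a b r s => Real.sqrt |g.det| * Kmat g⁻¹ a b r s := rfl
  simp only [TR0, hK]
  rw [smul3gen (Real.sqrt |g.det|) (Kmat g⁻¹) eps4
      (fun a3 b3 b4 => Kmat g⁻¹ a3 i b3 b4) (fun a4 b5 b6 => Kmat g⁻¹ a4 j b5 b6)
      (fun b1 b2 b5 => eps4 b1 b2 b5 k) (fun b3 b4 b6 => eps4 b3 b4 b6 l)]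
  rw [REARR1 (Kmat g⁻¹) eps4
      (fun a3 b3 b4 => Kmat g⁻¹ a3 i b3 b4) (fun a4 b5 b6 => Kmat g⁻¹ a4 j b5 b6)
      (fun b1 b2 b5 => eps4 b1 b2 b5 k) (fun b3 b4 b6 => eps4 b3 b4 b6 l)]
  simp only [KC g⁻¹]
  simp only [Kmat]
  rw [REARR2 eps4 (fun a1 a2 b5 => 2 * (g⁻¹ a1 b5 * g⁻¹ a2 k - g⁻¹ a1 k * g⁻¹ a2 b5))
      (fun a3 b6 => 2 * (g⁻¹ a3 b6 * g⁻¹ i l - g⁻¹ a3 l * g⁻¹ i b6))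
      (fun a4 p => g⁻¹ a4 p) (fun q => g⁻¹ j q) eps4]
  simp only [DD g⁻¹]
  rw [FIN g⁻¹ i j k l]
  ring

set_option maxHeartbeats 4000000 in
lemma TR_hodge_formula (g : Matrix (Fin 4) (Fin 4) ℝ) (ξ : Fin 4 → ℝ) :
    TR (hodge g) ξ = (Real.sqrt |g.det|) ^ 3 * (g⁻¹).det * (gform g ξ ξ) ^ 2 := by
  rw [TR, gform]
  simp only [TR0_hodge]
  simp only [Fin.sum_univ_four]
  ring

/-- For an invertible symmetric `g`, the Tamm-Rubilar quartic form of the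
Hodge star medium tensor `*_g` is `sgn(det g) √|det g| (g(ξ,ξ))²`; consequently the
Fresnel surface of `*_g` is exactly the null cone of `g` on covectors. -/

theorem tammRubilar_of_hodge
    (g : Matrix (Fin 4) (Fin 4) ℝ) (hsymm : g.IsSymm) (hdet : IsUnit g.det) :
    (∀ ξ : Fin 4 → ℝ,
        TR (hodge g) ξ = Real.sign g.det * Real.sqrt |g.det| * (gform g ξ ξ) ^ 2) ∧
      {ξ : Fin 4 → ℝ | TR (hodge g) ξ = 0} = {ξ : Fin 4 → ℝ | gform g ξ ξ = 0} := by
  have hd0 : g.det ≠ 0 := hdet.ne_zero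
  have habs : 0 < |g.det| := abs_pos.mpr hd0
  have hc : 0 < Real.sqrt |g.det| := Real.sqrt_pos.mpr habs
  have hinv : (g⁻¹).det = (g.det)⁻¹ := by
    rw [Matrix.det_nonsing_inv, Ring.inverse_eq_inv']
  have key : (Real.sqrt |g.det|) ^ 3 * (g⁻¹).det = Real.sign g.det * Real.sqrt |g.det| := by
    rw [hinv]
    have h2 : (Real.sqrt |g.det|) ^ 2 = |g.det| := Real.sq_sqrt habs.le
    have h3 : (Real.sqrt |g.det|) ^ 3 = |g.det| * Real.sqrt |g.det| := by
      rw [pow_succ, h2, mul_comm]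
    rw [h3]
    rcases lt_or_gt_of_ne hd0 with hneg | hpos
    · rw [Real.sign_of_neg hneg, abs_of_neg hneg]
      field_simp
    · rw [Real.sign_of_pos hpos, abs_of_pos hpos]
      field_simp
  have formula : ∀ ξ : Fin 4 → ℝ,
      TR (hodge g) ξ = Real.sign g.det * Real.sqrt |g.det| * (gform g ξ ξ) ^ 2 := by
    intro ξ
    rw [TR_hodge_formula g ξ, key]
  refine ⟨formula, ?_⟩
  ext ξ
  simp only [Set.mem_setOf_eq]
  rw [formula ξ]
  have hs : Real.sign g.det ≠ 0 := by
    rcases lt_or_gt_of_ne hd0 with hn | hp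
    · rw [Real.sign_of_neg hn]; norm_num
    · rw [Real.sign_of_pos hp]; norm_num
  constructor
  · intro h0
    rcases mul_eq_zero.mp h0 with h1 | h2
    · rcases mul_eq_zero.mp h1 with h3 | h4
      · exact absurd h3 hs
      · exact absurd h4 hc.ne'
    · exact (pow_eq_zero_iff two_ne_zero).mp h2
  · intro hq
    rw [hq]; ring

end
end

section
/- Let g be an invertible symmetric real 4×4 matrix, let κ = *_g be its Hodge star medium tensor, and let ξ ∈ ℝ⁴ be nonzero. Then the kernel of the linear map L_ξ : α ↦ ξ ∧ κ(ξ∧α) has dimension 3 if g(ξ,ξ) = 0, and dimension 1 (namely ker L_ξ = span ξ) if g(ξ,ξ) ≠ 0. -/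
open scoped BigOperators
open Matrix

noncomputable section

/-- The 2-form `ξ ∧ α` of two covectors. -/
def wcov (ξ α : Fin 4 → ℝ) (i j : Fin 4) : ℝ := ξ i * α j - ξ j * α i

/-- The 3-form `L_ξ(α) = ξ ∧ κ(ξ ∧ α)`. -/
def Lfun (κ : Fin 4 → Fin 4 → Fin 4 → Fin 4 → ℝ) (ξ α : Fin 4 → ℝ) (i j k : Fin 4) : ℝ :=
  ξ i * act κ (wcov ξ α) j k + ξ j * act κ (wcov ξ α) k i + ξ k * act κ (wcov ξ α) i j

lemma act_wcov_add (κ : Fin 4 → Fin 4 → Fin 4 → Fin 4 → ℝ) (ξ α β : Fin 4 → ℝ) (j k : Fin 4) :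
    act κ (wcov ξ (α + β)) j k = act κ (wcov ξ α) j k + act κ (wcov ξ β) j k := by
  simp only [act, wcov, Pi.add_apply, Finset.mul_sum]
  rw [← Finset.sum_add_distrib]
  refine Finset.sum_congr rfl fun r _ => ?_
  rw [← Finset.sum_add_distrib]
  exact Finset.sum_congr rfl fun s _ => by ring

lemma act_wcov_smul (κ : Fin 4 → Fin 4 → Fin 4 → Fin 4 → ℝ) (ξ : Fin 4 → ℝ) (c : ℝ)
    (α : Fin 4 → ℝ) (j k : Fin 4) :
    act κ (wcov ξ (c • α)) j k = c * act κ (wcov ξ α) j k := by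
  simp only [act, wcov, Pi.smul_apply, smul_eq_mul, Finset.mul_sum]
  exact Finset.sum_congr rfl fun r _ => Finset.sum_congr rfl fun s _ => by ring

/-- `L_ξ` as a linear map from covectors to 3-forms. -/
def Lmap (κ : Fin 4 → Fin 4 → Fin 4 → Fin 4 → ℝ) (ξ : Fin 4 → ℝ) :
    (Fin 4 → ℝ) →ₗ[ℝ] (Fin 4 → Fin 4 → Fin 4 → ℝ) where
  toFun α := Lfun κ ξ α
  map_add' α β := by
    funext i j k
    simp only [Lfun, act_wcov_add, Pi.add_apply]
    ring
  map_smul' c α := by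
    funext i j k
    simp only [Lfun, act_wcov_smul, Pi.smul_apply, smul_eq_mul, RingHom.id_apply]
    ring

/-! ### Auxiliary machinery for STATEMENT 8 -/

lemma fv0 : (0:Fin 4).val = 0 := rfl
lemma fv1 : (1:Fin 4).val = 1 := rfl
lemma fv2 : (2:Fin 4).val = 2 := rfl
lemma fv3 : (3:Fin 4).val = 3 := rfl

lemma fin4cases : ∀ i : Fin 4, i = 0 ∨ i = 1 ∨ i = 2 ∨ i = 3 := by decide

lemma eps4_0000 : eps4 0 0 0 0 = 0 := by norm_num [eps4, fv0, fv1, fv2, fv3]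
lemma eps4_0001 : eps4 0 0 0 1 = 0 := by norm_num [eps4, fv0, fv1, fv2, fv3]
lemma eps4_0002 : eps4 0 0 0 2 = 0 := by norm_num [eps4, fv0, fv1, fv2, fv3]
lemma eps4_0003 : eps4 0 0 0 3 = 0 := by norm_num [eps4, fv0, fv1, fv2, fv3]
lemma eps4_0010 : eps4 0 0 1 0 = 0 := by norm_num [eps4, fv0, fv1, fv2, fv3]
lemma eps4_0011 : eps4 0 0 1 1 = 0 := by norm_num [eps4, fv0, fv1, fv2, fv3]
lemma eps4_0012 : eps4 0 0 1 2 = 0 := by norm_num [eps4, fv0, fv1, fv2, fv3]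
lemma eps4_0013 : eps4 0 0 1 3 = 0 := by norm_num [eps4, fv0, fv1, fv2, fv3]
lemma eps4_0020 : eps4 0 0 2 0 = 0 := by norm_num [eps4, fv0, fv1, fv2, fv3]
lemma eps4_0021 : eps4 0 0 2 1 = 0 := by norm_num [eps4, fv0, fv1, fv2, fv3]
lemma eps4_0022 : eps4 0 0 2 2 = 0 := by norm_num [eps4, fv0, fv1, fv2, fv3]
lemma eps4_0023 : eps4 0 0 2 3 = 0 := by norm_num [eps4, fv0, fv1, fv2, fv3]
lemma eps4_0030 : eps4 0 0 3 0 = 0 := by norm_num [eps4, fv0, fv1, fv2, fv3]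
lemma eps4_0031 : eps4 0 0 3 1 = 0 := by norm_num [eps4, fv0, fv1, fv2, fv3]
lemma eps4_0032 : eps4 0 0 3 2 = 0 := by norm_num [eps4, fv0, fv1, fv2, fv3]
lemma eps4_0033 : eps4 0 0 3 3 = 0 := by norm_num [eps4, fv0, fv1, fv2, fv3]
lemma eps4_0100 : eps4 0 1 0 0 = 0 := by norm_num [eps4, fv0, fv1, fv2, fv3]
lemma eps4_0101 : eps4 0 1 0 1 = 0 := by norm_num [eps4, fv0, fv1, fv2, fv3]
lemma eps4_0102 : eps4 0 1 0 2 = 0 := by norm_num [eps4, fv0, fv1, fv2, fv3]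
lemma eps4_0103 : eps4 0 1 0 3 = 0 := by norm_num [eps4, fv0, fv1, fv2, fv3]
lemma eps4_0110 : eps4 0 1 1 0 = 0 := by norm_num [eps4, fv0, fv1, fv2, fv3]
lemma eps4_0111 : eps4 0 1 1 1 = 0 := by norm_num [eps4, fv0, fv1, fv2, fv3]
lemma eps4_0112 : eps4 0 1 1 2 = 0 := by norm_num [eps4, fv0, fv1, fv2, fv3]
lemma eps4_0113 : eps4 0 1 1 3 = 0 := by norm_num [eps4, fv0, fv1, fv2, fv3]
lemma eps4_0120 : eps4 0 1 2 0 = 0 := by norm_num [eps4, fv0, fv1, fv2, fv3]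
lemma eps4_0121 : eps4 0 1 2 1 = 0 := by norm_num [eps4, fv0, fv1, fv2, fv3]
lemma eps4_0122 : eps4 0 1 2 2 = 0 := by norm_num [eps4, fv0, fv1, fv2, fv3]
lemma eps4_0123 : eps4 0 1 2 3 = 1 := by norm_num [eps4, fv0, fv1, fv2, fv3]
lemma eps4_0130 : eps4 0 1 3 0 = 0 := by norm_num [eps4, fv0, fv1, fv2, fv3]
lemma eps4_0131 : eps4 0 1 3 1 = 0 := by norm_num [eps4, fv0, fv1, fv2, fv3]
lemma eps4_0132 : eps4 0 1 3 2 = -1 := by norm_num [eps4, fv0, fv1, fv2, fv3]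
lemma eps4_0133 : eps4 0 1 3 3 = 0 := by norm_num [eps4, fv0, fv1, fv2, fv3]
lemma eps4_0200 : eps4 0 2 0 0 = 0 := by norm_num [eps4, fv0, fv1, fv2, fv3]
lemma eps4_0201 : eps4 0 2 0 1 = 0 := by norm_num [eps4, fv0, fv1, fv2, fv3]
lemma eps4_0202 : eps4 0 2 0 2 = 0 := by norm_num [eps4, fv0, fv1, fv2, fv3]
lemma eps4_0203 : eps4 0 2 0 3 = 0 := by norm_num [eps4, fv0, fv1, fv2, fv3]
lemma eps4_0210 : eps4 0 2 1 0 = 0 := by norm_num [eps4, fv0, fv1, fv2, fv3]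
lemma eps4_0211 : eps4 0 2 1 1 = 0 := by norm_num [eps4, fv0, fv1, fv2, fv3]
lemma eps4_0212 : eps4 0 2 1 2 = 0 := by norm_num [eps4, fv0, fv1, fv2, fv3]
lemma eps4_0213 : eps4 0 2 1 3 = -1 := by norm_num [eps4, fv0, fv1, fv2, fv3]
lemma eps4_0220 : eps4 0 2 2 0 = 0 := by norm_num [eps4, fv0, fv1, fv2, fv3]
lemma eps4_0221 : eps4 0 2 2 1 = 0 := by norm_num [eps4, fv0, fv1, fv2, fv3]
lemma eps4_0222 : eps4 0 2 2 2 = 0 := by norm_num [eps4, fv0, fv1, fv2, fv3]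
lemma eps4_0223 : eps4 0 2 2 3 = 0 := by norm_num [eps4, fv0, fv1, fv2, fv3]
lemma eps4_0230 : eps4 0 2 3 0 = 0 := by norm_num [eps4, fv0, fv1, fv2, fv3]
lemma eps4_0231 : eps4 0 2 3 1 = 1 := by norm_num [eps4, fv0, fv1, fv2, fv3]
lemma eps4_0232 : eps4 0 2 3 2 = 0 := by norm_num [eps4, fv0, fv1, fv2, fv3]
lemma eps4_0233 : eps4 0 2 3 3 = 0 := by norm_num [eps4, fv0, fv1, fv2, fv3]
lemma eps4_0300 : eps4 0 3 0 0 = 0 := by norm_num [eps4, fv0, fv1, fv2, fv3]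
lemma eps4_0301 : eps4 0 3 0 1 = 0 := by norm_num [eps4, fv0, fv1, fv2, fv3]
lemma eps4_0302 : eps4 0 3 0 2 = 0 := by norm_num [eps4, fv0, fv1, fv2, fv3]
lemma eps4_0303 : eps4 0 3 0 3 = 0 := by norm_num [eps4, fv0, fv1, fv2, fv3]
lemma eps4_0310 : eps4 0 3 1 0 = 0 := by norm_num [eps4, fv0, fv1, fv2, fv3]
lemma eps4_0311 : eps4 0 3 1 1 = 0 := by norm_num [eps4, fv0, fv1, fv2, fv3]
lemma eps4_0312 : eps4 0 3 1 2 = 1 := by norm_num [eps4, fv0, fv1, fv2, fv3]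
lemma eps4_0313 : eps4 0 3 1 3 = 0 := by norm_num [eps4, fv0, fv1, fv2, fv3]
lemma eps4_0320 : eps4 0 3 2 0 = 0 := by norm_num [eps4, fv0, fv1, fv2, fv3]
lemma eps4_0321 : eps4 0 3 2 1 = -1 := by norm_num [eps4, fv0, fv1, fv2, fv3]
lemma eps4_0322 : eps4 0 3 2 2 = 0 := by norm_num [eps4, fv0, fv1, fv2, fv3]
lemma eps4_0323 : eps4 0 3 2 3 = 0 := by norm_num [eps4, fv0, fv1, fv2, fv3]
lemma eps4_0330 : eps4 0 3 3 0 = 0 := by norm_num [eps4, fv0, fv1, fv2, fv3]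
lemma eps4_0331 : eps4 0 3 3 1 = 0 := by norm_num [eps4, fv0, fv1, fv2, fv3]
lemma eps4_0332 : eps4 0 3 3 2 = 0 := by norm_num [eps4, fv0, fv1, fv2, fv3]
lemma eps4_0333 : eps4 0 3 3 3 = 0 := by norm_num [eps4, fv0, fv1, fv2, fv3]
lemma eps4_1000 : eps4 1 0 0 0 = 0 := by norm_num [eps4, fv0, fv1, fv2, fv3]
lemma eps4_1001 : eps4 1 0 0 1 = 0 := by norm_num [eps4, fv0, fv1, fv2, fv3]
lemma eps4_1002 : eps4 1 0 0 2 = 0 := by norm_num [eps4, fv0, fv1, fv2, fv3]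
lemma eps4_1003 : eps4 1 0 0 3 = 0 := by norm_num [eps4, fv0, fv1, fv2, fv3]
lemma eps4_1010 : eps4 1 0 1 0 = 0 := by norm_num [eps4, fv0, fv1, fv2, fv3]
lemma eps4_1011 : eps4 1 0 1 1 = 0 := by norm_num [eps4, fv0, fv1, fv2, fv3]
lemma eps4_1012 : eps4 1 0 1 2 = 0 := by norm_num [eps4, fv0, fv1, fv2, fv3]
lemma eps4_1013 : eps4 1 0 1 3 = 0 := by norm_num [eps4, fv0, fv1, fv2, fv3]
lemma eps4_1020 : eps4 1 0 2 0 = 0 := by norm_num [eps4, fv0, fv1, fv2, fv3]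
lemma eps4_1021 : eps4 1 0 2 1 = 0 := by norm_num [eps4, fv0, fv1, fv2, fv3]
lemma eps4_1022 : eps4 1 0 2 2 = 0 := by norm_num [eps4, fv0, fv1, fv2, fv3]
lemma eps4_1023 : eps4 1 0 2 3 = -1 := by norm_num [eps4, fv0, fv1, fv2, fv3]
lemma eps4_1030 : eps4 1 0 3 0 = 0 := by norm_num [eps4, fv0, fv1, fv2, fv3]
lemma eps4_1031 : eps4 1 0 3 1 = 0 := by norm_num [eps4, fv0, fv1, fv2, fv3]
lemma eps4_1032 : eps4 1 0 3 2 = 1 := by norm_num [eps4, fv0, fv1, fv2, fv3]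
lemma eps4_1033 : eps4 1 0 3 3 = 0 := by norm_num [eps4, fv0, fv1, fv2, fv3]
lemma eps4_1100 : eps4 1 1 0 0 = 0 := by norm_num [eps4, fv0, fv1, fv2, fv3]
lemma eps4_1101 : eps4 1 1 0 1 = 0 := by norm_num [eps4, fv0, fv1, fv2, fv3]
lemma eps4_1102 : eps4 1 1 0 2 = 0 := by norm_num [eps4, fv0, fv1, fv2, fv3]
lemma eps4_1103 : eps4 1 1 0 3 = 0 := by norm_num [eps4, fv0, fv1, fv2, fv3]
lemma eps4_1110 : eps4 1 1 1 0 = 0 := by norm_num [eps4, fv0, fv1, fv2, fv3]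
lemma eps4_1111 : eps4 1 1 1 1 = 0 := by norm_num [eps4, fv0, fv1, fv2, fv3]
lemma eps4_1112 : eps4 1 1 1 2 = 0 := by norm_num [eps4, fv0, fv1, fv2, fv3]
lemma eps4_1113 : eps4 1 1 1 3 = 0 := by norm_num [eps4, fv0, fv1, fv2, fv3]
lemma eps4_1120 : eps4 1 1 2 0 = 0 := by norm_num [eps4, fv0, fv1, fv2, fv3]
lemma eps4_1121 : eps4 1 1 2 1 = 0 := by norm_num [eps4, fv0, fv1, fv2, fv3]
lemma eps4_1122 : eps4 1 1 2 2 = 0 := by norm_num [eps4, fv0, fv1, fv2, fv3]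
lemma eps4_1123 : eps4 1 1 2 3 = 0 := by norm_num [eps4, fv0, fv1, fv2, fv3]
lemma eps4_1130 : eps4 1 1 3 0 = 0 := by norm_num [eps4, fv0, fv1, fv2, fv3]
lemma eps4_1131 : eps4 1 1 3 1 = 0 := by norm_num [eps4, fv0, fv1, fv2, fv3]
lemma eps4_1132 : eps4 1 1 3 2 = 0 := by norm_num [eps4, fv0, fv1, fv2, fv3]
lemma eps4_1133 : eps4 1 1 3 3 = 0 := by norm_num [eps4, fv0, fv1, fv2, fv3]
lemma eps4_1200 : eps4 1 2 0 0 = 0 := by norm_num [eps4, fv0, fv1, fv2, fv3]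
lemma eps4_1201 : eps4 1 2 0 1 = 0 := by norm_num [eps4, fv0, fv1, fv2, fv3]
lemma eps4_1202 : eps4 1 2 0 2 = 0 := by norm_num [eps4, fv0, fv1, fv2, fv3]
lemma eps4_1203 : eps4 1 2 0 3 = 1 := by norm_num [eps4, fv0, fv1, fv2, fv3]
lemma eps4_1210 : eps4 1 2 1 0 = 0 := by norm_num [eps4, fv0, fv1, fv2, fv3]
lemma eps4_1211 : eps4 1 2 1 1 = 0 := by norm_num [eps4, fv0, fv1, fv2, fv3]
lemma eps4_1212 : eps4 1 2 1 2 = 0 := by norm_num [eps4, fv0, fv1, fv2, fv3]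
lemma eps4_1213 : eps4 1 2 1 3 = 0 := by norm_num [eps4, fv0, fv1, fv2, fv3]
lemma eps4_1220 : eps4 1 2 2 0 = 0 := by norm_num [eps4, fv0, fv1, fv2, fv3]
lemma eps4_1221 : eps4 1 2 2 1 = 0 := by norm_num [eps4, fv0, fv1, fv2, fv3]
lemma eps4_1222 : eps4 1 2 2 2 = 0 := by norm_num [eps4, fv0, fv1, fv2, fv3]
lemma eps4_1223 : eps4 1 2 2 3 = 0 := by norm_num [eps4, fv0, fv1, fv2, fv3]
lemma eps4_1230 : eps4 1 2 3 0 = -1 := by norm_num [eps4, fv0, fv1, fv2, fv3]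
lemma eps4_1231 : eps4 1 2 3 1 = 0 := by norm_num [eps4, fv0, fv1, fv2, fv3]
lemma eps4_1232 : eps4 1 2 3 2 = 0 := by norm_num [eps4, fv0, fv1, fv2, fv3]
lemma eps4_1233 : eps4 1 2 3 3 = 0 := by norm_num [eps4, fv0, fv1, fv2, fv3]
lemma eps4_1300 : eps4 1 3 0 0 = 0 := by norm_num [eps4, fv0, fv1, fv2, fv3]
lemma eps4_1301 : eps4 1 3 0 1 = 0 := by norm_num [eps4, fv0, fv1, fv2, fv3]
lemma eps4_1302 : eps4 1 3 0 2 = -1 := by norm_num [eps4, fv0, fv1, fv2, fv3]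
lemma eps4_1303 : eps4 1 3 0 3 = 0 := by norm_num [eps4, fv0, fv1, fv2, fv3]
lemma eps4_1310 : eps4 1 3 1 0 = 0 := by norm_num [eps4, fv0, fv1, fv2, fv3]
lemma eps4_1311 : eps4 1 3 1 1 = 0 := by norm_num [eps4, fv0, fv1, fv2, fv3]
lemma eps4_1312 : eps4 1 3 1 2 = 0 := by norm_num [eps4, fv0, fv1, fv2, fv3]
lemma eps4_1313 : eps4 1 3 1 3 = 0 := by norm_num [eps4, fv0, fv1, fv2, fv3]
lemma eps4_1320 : eps4 1 3 2 0 = 1 := by norm_num [eps4, fv0, fv1, fv2, fv3]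
lemma eps4_1321 : eps4 1 3 2 1 = 0 := by norm_num [eps4, fv0, fv1, fv2, fv3]
lemma eps4_1322 : eps4 1 3 2 2 = 0 := by norm_num [eps4, fv0, fv1, fv2, fv3]
lemma eps4_1323 : eps4 1 3 2 3 = 0 := by norm_num [eps4, fv0, fv1, fv2, fv3]
lemma eps4_1330 : eps4 1 3 3 0 = 0 := by norm_num [eps4, fv0, fv1, fv2, fv3]
lemma eps4_1331 : eps4 1 3 3 1 = 0 := by norm_num [eps4, fv0, fv1, fv2, fv3]
lemma eps4_1332 : eps4 1 3 3 2 = 0 := by norm_num [eps4, fv0, fv1, fv2, fv3]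
lemma eps4_1333 : eps4 1 3 3 3 = 0 := by norm_num [eps4, fv0, fv1, fv2, fv3]
lemma eps4_2000 : eps4 2 0 0 0 = 0 := by norm_num [eps4, fv0, fv1, fv2, fv3]
lemma eps4_2001 : eps4 2 0 0 1 = 0 := by norm_num [eps4, fv0, fv1, fv2, fv3]
lemma eps4_2002 : eps4 2 0 0 2 = 0 := by norm_num [eps4, fv0, fv1, fv2, fv3]
lemma eps4_2003 : eps4 2 0 0 3 = 0 := by norm_num [eps4, fv0, fv1, fv2, fv3]
lemma eps4_2010 : eps4 2 0 1 0 = 0 := by norm_num [eps4, fv0, fv1, fv2, fv3]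
lemma eps4_2011 : eps4 2 0 1 1 = 0 := by norm_num [eps4, fv0, fv1, fv2, fv3]
lemma eps4_2012 : eps4 2 0 1 2 = 0 := by norm_num [eps4, fv0, fv1, fv2, fv3]
lemma eps4_2013 : eps4 2 0 1 3 = 1 := by norm_num [eps4, fv0, fv1, fv2, fv3]
lemma eps4_2020 : eps4 2 0 2 0 = 0 := by norm_num [eps4, fv0, fv1, fv2, fv3]
lemma eps4_2021 : eps4 2 0 2 1 = 0 := by norm_num [eps4, fv0, fv1, fv2, fv3]
lemma eps4_2022 : eps4 2 0 2 2 = 0 := by norm_num [eps4, fv0, fv1, fv2, fv3]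
lemma eps4_2023 : eps4 2 0 2 3 = 0 := by norm_num [eps4, fv0, fv1, fv2, fv3]
lemma eps4_2030 : eps4 2 0 3 0 = 0 := by norm_num [eps4, fv0, fv1, fv2, fv3]
lemma eps4_2031 : eps4 2 0 3 1 = -1 := by norm_num [eps4, fv0, fv1, fv2, fv3]
lemma eps4_2032 : eps4 2 0 3 2 = 0 := by norm_num [eps4, fv0, fv1, fv2, fv3]
lemma eps4_2033 : eps4 2 0 3 3 = 0 := by norm_num [eps4, fv0, fv1, fv2, fv3]
lemma eps4_2100 : eps4 2 1 0 0 = 0 := by norm_num [eps4, fv0, fv1, fv2, fv3]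
lemma eps4_2101 : eps4 2 1 0 1 = 0 := by norm_num [eps4, fv0, fv1, fv2, fv3]
lemma eps4_2102 : eps4 2 1 0 2 = 0 := by norm_num [eps4, fv0, fv1, fv2, fv3]
lemma eps4_2103 : eps4 2 1 0 3 = -1 := by norm_num [eps4, fv0, fv1, fv2, fv3]
lemma eps4_2110 : eps4 2 1 1 0 = 0 := by norm_num [eps4, fv0, fv1, fv2, fv3]
lemma eps4_2111 : eps4 2 1 1 1 = 0 := by norm_num [eps4, fv0, fv1, fv2, fv3]
lemma eps4_2112 : eps4 2 1 1 2 = 0 := by norm_num [eps4, fv0, fv1, fv2, fv3]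
lemma eps4_2113 : eps4 2 1 1 3 = 0 := by norm_num [eps4, fv0, fv1, fv2, fv3]
lemma eps4_2120 : eps4 2 1 2 0 = 0 := by norm_num [eps4, fv0, fv1, fv2, fv3]
lemma eps4_2121 : eps4 2 1 2 1 = 0 := by norm_num [eps4, fv0, fv1, fv2, fv3]
lemma eps4_2122 : eps4 2 1 2 2 = 0 := by norm_num [eps4, fv0, fv1, fv2, fv3]
lemma eps4_2123 : eps4 2 1 2 3 = 0 := by norm_num [eps4, fv0, fv1, fv2, fv3]
lemma eps4_2130 : eps4 2 1 3 0 = 1 := by norm_num [eps4, fv0, fv1, fv2, fv3]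
lemma eps4_2131 : eps4 2 1 3 1 = 0 := by norm_num [eps4, fv0, fv1, fv2, fv3]
lemma eps4_2132 : eps4 2 1 3 2 = 0 := by norm_num [eps4, fv0, fv1, fv2, fv3]
lemma eps4_2133 : eps4 2 1 3 3 = 0 := by norm_num [eps4, fv0, fv1, fv2, fv3]
lemma eps4_2200 : eps4 2 2 0 0 = 0 := by norm_num [eps4, fv0, fv1, fv2, fv3]
lemma eps4_2201 : eps4 2 2 0 1 = 0 := by norm_num [eps4, fv0, fv1, fv2, fv3]
lemma eps4_2202 : eps4 2 2 0 2 = 0 := by norm_num [eps4, fv0, fv1, fv2, fv3]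
lemma eps4_2203 : eps4 2 2 0 3 = 0 := by norm_num [eps4, fv0, fv1, fv2, fv3]
lemma eps4_2210 : eps4 2 2 1 0 = 0 := by norm_num [eps4, fv0, fv1, fv2, fv3]
lemma eps4_2211 : eps4 2 2 1 1 = 0 := by norm_num [eps4, fv0, fv1, fv2, fv3]
lemma eps4_2212 : eps4 2 2 1 2 = 0 := by norm_num [eps4, fv0, fv1, fv2, fv3]
lemma eps4_2213 : eps4 2 2 1 3 = 0 := by norm_num [eps4, fv0, fv1, fv2, fv3]
lemma eps4_2220 : eps4 2 2 2 0 = 0 := by norm_num [eps4, fv0, fv1, fv2, fv3]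
lemma eps4_2221 : eps4 2 2 2 1 = 0 := by norm_num [eps4, fv0, fv1, fv2, fv3]
lemma eps4_2222 : eps4 2 2 2 2 = 0 := by norm_num [eps4, fv0, fv1, fv2, fv3]
lemma eps4_2223 : eps4 2 2 2 3 = 0 := by norm_num [eps4, fv0, fv1, fv2, fv3]
lemma eps4_2230 : eps4 2 2 3 0 = 0 := by norm_num [eps4, fv0, fv1, fv2, fv3]
lemma eps4_2231 : eps4 2 2 3 1 = 0 := by norm_num [eps4, fv0, fv1, fv2, fv3]
lemma eps4_2232 : eps4 2 2 3 2 = 0 := by norm_num [eps4, fv0, fv1, fv2, fv3]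
lemma eps4_2233 : eps4 2 2 3 3 = 0 := by norm_num [eps4, fv0, fv1, fv2, fv3]
lemma eps4_2300 : eps4 2 3 0 0 = 0 := by norm_num [eps4, fv0, fv1, fv2, fv3]
lemma eps4_2301 : eps4 2 3 0 1 = 1 := by norm_num [eps4, fv0, fv1, fv2, fv3]
lemma eps4_2302 : eps4 2 3 0 2 = 0 := by norm_num [eps4, fv0, fv1, fv2, fv3]
lemma eps4_2303 : eps4 2 3 0 3 = 0 := by norm_num [eps4, fv0, fv1, fv2, fv3]
lemma eps4_2310 : eps4 2 3 1 0 = -1 := by norm_num [eps4, fv0, fv1, fv2, fv3]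
lemma eps4_2311 : eps4 2 3 1 1 = 0 := by norm_num [eps4, fv0, fv1, fv2, fv3]
lemma eps4_2312 : eps4 2 3 1 2 = 0 := by norm_num [eps4, fv0, fv1, fv2, fv3]
lemma eps4_2313 : eps4 2 3 1 3 = 0 := by norm_num [eps4, fv0, fv1, fv2, fv3]
lemma eps4_2320 : eps4 2 3 2 0 = 0 := by norm_num [eps4, fv0, fv1, fv2, fv3]
lemma eps4_2321 : eps4 2 3 2 1 = 0 := by norm_num [eps4, fv0, fv1, fv2, fv3]
lemma eps4_2322 : eps4 2 3 2 2 = 0 := by norm_num [eps4, fv0, fv1, fv2, fv3]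
lemma eps4_2323 : eps4 2 3 2 3 = 0 := by norm_num [eps4, fv0, fv1, fv2, fv3]
lemma eps4_2330 : eps4 2 3 3 0 = 0 := by norm_num [eps4, fv0, fv1, fv2, fv3]
lemma eps4_2331 : eps4 2 3 3 1 = 0 := by norm_num [eps4, fv0, fv1, fv2, fv3]
lemma eps4_2332 : eps4 2 3 3 2 = 0 := by norm_num [eps4, fv0, fv1, fv2, fv3]
lemma eps4_2333 : eps4 2 3 3 3 = 0 := by norm_num [eps4, fv0, fv1, fv2, fv3]
lemma eps4_3000 : eps4 3 0 0 0 = 0 := by norm_num [eps4, fv0, fv1, fv2, fv3]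
lemma eps4_3001 : eps4 3 0 0 1 = 0 := by norm_num [eps4, fv0, fv1, fv2, fv3]
lemma eps4_3002 : eps4 3 0 0 2 = 0 := by norm_num [eps4, fv0, fv1, fv2, fv3]
lemma eps4_3003 : eps4 3 0 0 3 = 0 := by norm_num [eps4, fv0, fv1, fv2, fv3]
lemma eps4_3010 : eps4 3 0 1 0 = 0 := by norm_num [eps4, fv0, fv1, fv2, fv3]
lemma eps4_3011 : eps4 3 0 1 1 = 0 := by norm_num [eps4, fv0, fv1, fv2, fv3]
lemma eps4_3012 : eps4 3 0 1 2 = -1 := by norm_num [eps4, fv0, fv1, fv2, fv3]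
lemma eps4_3013 : eps4 3 0 1 3 = 0 := by norm_num [eps4, fv0, fv1, fv2, fv3]
lemma eps4_3020 : eps4 3 0 2 0 = 0 := by norm_num [eps4, fv0, fv1, fv2, fv3]
lemma eps4_3021 : eps4 3 0 2 1 = 1 := by norm_num [eps4, fv0, fv1, fv2, fv3]
lemma eps4_3022 : eps4 3 0 2 2 = 0 := by norm_num [eps4, fv0, fv1, fv2, fv3]
lemma eps4_3023 : eps4 3 0 2 3 = 0 := by norm_num [eps4, fv0, fv1, fv2, fv3]
lemma eps4_3030 : eps4 3 0 3 0 = 0 := by norm_num [eps4, fv0, fv1, fv2, fv3]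
lemma eps4_3031 : eps4 3 0 3 1 = 0 := by norm_num [eps4, fv0, fv1, fv2, fv3]
lemma eps4_3032 : eps4 3 0 3 2 = 0 := by norm_num [eps4, fv0, fv1, fv2, fv3]
lemma eps4_3033 : eps4 3 0 3 3 = 0 := by norm_num [eps4, fv0, fv1, fv2, fv3]
lemma eps4_3100 : eps4 3 1 0 0 = 0 := by norm_num [eps4, fv0, fv1, fv2, fv3]
lemma eps4_3101 : eps4 3 1 0 1 = 0 := by norm_num [eps4, fv0, fv1, fv2, fv3]
lemma eps4_3102 : eps4 3 1 0 2 = 1 := by norm_num [eps4, fv0, fv1, fv2, fv3]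
lemma eps4_3103 : eps4 3 1 0 3 = 0 := by norm_num [eps4, fv0, fv1, fv2, fv3]
lemma eps4_3110 : eps4 3 1 1 0 = 0 := by norm_num [eps4, fv0, fv1, fv2, fv3]
lemma eps4_3111 : eps4 3 1 1 1 = 0 := by norm_num [eps4, fv0, fv1, fv2, fv3]
lemma eps4_3112 : eps4 3 1 1 2 = 0 := by norm_num [eps4, fv0, fv1, fv2, fv3]
lemma eps4_3113 : eps4 3 1 1 3 = 0 := by norm_num [eps4, fv0, fv1, fv2, fv3]
lemma eps4_3120 : eps4 3 1 2 0 = -1 := by norm_num [eps4, fv0, fv1, fv2, fv3]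
lemma eps4_3121 : eps4 3 1 2 1 = 0 := by norm_num [eps4, fv0, fv1, fv2, fv3]
lemma eps4_3122 : eps4 3 1 2 2 = 0 := by norm_num [eps4, fv0, fv1, fv2, fv3]
lemma eps4_3123 : eps4 3 1 2 3 = 0 := by norm_num [eps4, fv0, fv1, fv2, fv3]
lemma eps4_3130 : eps4 3 1 3 0 = 0 := by norm_num [eps4, fv0, fv1, fv2, fv3]
lemma eps4_3131 : eps4 3 1 3 1 = 0 := by norm_num [eps4, fv0, fv1, fv2, fv3]
lemma eps4_3132 : eps4 3 1 3 2 = 0 := by norm_num [eps4, fv0, fv1, fv2, fv3]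
lemma eps4_3133 : eps4 3 1 3 3 = 0 := by norm_num [eps4, fv0, fv1, fv2, fv3]
lemma eps4_3200 : eps4 3 2 0 0 = 0 := by norm_num [eps4, fv0, fv1, fv2, fv3]
lemma eps4_3201 : eps4 3 2 0 1 = -1 := by norm_num [eps4, fv0, fv1, fv2, fv3]
lemma eps4_3202 : eps4 3 2 0 2 = 0 := by norm_num [eps4, fv0, fv1, fv2, fv3]
lemma eps4_3203 : eps4 3 2 0 3 = 0 := by norm_num [eps4, fv0, fv1, fv2, fv3]
lemma eps4_3210 : eps4 3 2 1 0 = 1 := by norm_num [eps4, fv0, fv1, fv2, fv3]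
lemma eps4_3211 : eps4 3 2 1 1 = 0 := by norm_num [eps4, fv0, fv1, fv2, fv3]
lemma eps4_3212 : eps4 3 2 1 2 = 0 := by norm_num [eps4, fv0, fv1, fv2, fv3]
lemma eps4_3213 : eps4 3 2 1 3 = 0 := by norm_num [eps4, fv0, fv1, fv2, fv3]
lemma eps4_3220 : eps4 3 2 2 0 = 0 := by norm_num [eps4, fv0, fv1, fv2, fv3]
lemma eps4_3221 : eps4 3 2 2 1 = 0 := by norm_num [eps4, fv0, fv1, fv2, fv3]
lemma eps4_3222 : eps4 3 2 2 2 = 0 := by norm_num [eps4, fv0, fv1, fv2, fv3]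
lemma eps4_3223 : eps4 3 2 2 3 = 0 := by norm_num [eps4, fv0, fv1, fv2, fv3]
lemma eps4_3230 : eps4 3 2 3 0 = 0 := by norm_num [eps4, fv0, fv1, fv2, fv3]
lemma eps4_3231 : eps4 3 2 3 1 = 0 := by norm_num [eps4, fv0, fv1, fv2, fv3]
lemma eps4_3232 : eps4 3 2 3 2 = 0 := by norm_num [eps4, fv0, fv1, fv2, fv3]
lemma eps4_3233 : eps4 3 2 3 3 = 0 := by norm_num [eps4, fv0, fv1, fv2, fv3]
lemma eps4_3300 : eps4 3 3 0 0 = 0 := by norm_num [eps4, fv0, fv1, fv2, fv3]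
lemma eps4_3301 : eps4 3 3 0 1 = 0 := by norm_num [eps4, fv0, fv1, fv2, fv3]
lemma eps4_3302 : eps4 3 3 0 2 = 0 := by norm_num [eps4, fv0, fv1, fv2, fv3]
lemma eps4_3303 : eps4 3 3 0 3 = 0 := by norm_num [eps4, fv0, fv1, fv2, fv3]
lemma eps4_3310 : eps4 3 3 1 0 = 0 := by norm_num [eps4, fv0, fv1, fv2, fv3]
lemma eps4_3311 : eps4 3 3 1 1 = 0 := by norm_num [eps4, fv0, fv1, fv2, fv3]
lemma eps4_3312 : eps4 3 3 1 2 = 0 := by norm_num [eps4, fv0, fv1, fv2, fv3]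
lemma eps4_3313 : eps4 3 3 1 3 = 0 := by norm_num [eps4, fv0, fv1, fv2, fv3]
lemma eps4_3320 : eps4 3 3 2 0 = 0 := by norm_num [eps4, fv0, fv1, fv2, fv3]
lemma eps4_3321 : eps4 3 3 2 1 = 0 := by norm_num [eps4, fv0, fv1, fv2, fv3]
lemma eps4_3322 : eps4 3 3 2 2 = 0 := by norm_num [eps4, fv0, fv1, fv2, fv3]
lemma eps4_3323 : eps4 3 3 2 3 = 0 := by norm_num [eps4, fv0, fv1, fv2, fv3]
lemma eps4_3330 : eps4 3 3 3 0 = 0 := by norm_num [eps4, fv0, fv1, fv2, fv3]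
lemma eps4_3331 : eps4 3 3 3 1 = 0 := by norm_num [eps4, fv0, fv1, fv2, fv3]
lemma eps4_3332 : eps4 3 3 3 2 = 0 := by norm_num [eps4, fv0, fv1, fv2, fv3]
lemma eps4_3333 : eps4 3 3 3 3 = 0 := by norm_num [eps4, fv0, fv1, fv2, fv3]

/-- `Uv g ξ a = g^{ra} ξ_r`, the raised-index vector of `ξ`. -/
def Uv (g : Matrix (Fin 4) (Fin 4) ℝ) (ξ : Fin 4 → ℝ) : Fin 4 → ℝ :=
  fun a => ∑ r, g⁻¹ r a * ξ r

lemma Uv_eq_vecMul (g : Matrix (Fin 4) (Fin 4) ℝ) (ξ : Fin 4 → ℝ) : Uv g ξ = ξ ᵥ* g⁻¹ := by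
  funext a
  simp [Uv, Matrix.vecMul, dotProduct, mul_comm]

lemma gform_eq (g : Matrix (Fin 4) (Fin 4) ℝ) (β ξ : Fin 4 → ℝ) :
    gform g β ξ = ∑ b, Uv g β b * ξ b := by
  rw [gform, Finset.sum_comm]
  simp only [Uv, Finset.sum_mul]

set_option maxHeartbeats 3200000 in
/-- Schouten-type contraction identity for `eps4`. -/
lemma eps4_key (u v x : Fin 4 → ℝ) (i j k : Fin 4) :
    x i * (∑ a, ∑ b, u a * v b * eps4 a b j k)
      + x j * (∑ a, ∑ b, u a * v b * eps4 a b k i)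
      + x k * (∑ a, ∑ b, u a * v b * eps4 a b i j)
    = ∑ a, ((∑ b, v b * x b) * u a - (∑ b, u b * x b) * v a) * eps4 a i j k := by
  rcases fin4cases i with rfl|rfl|rfl|rfl <;> rcases fin4cases j with rfl|rfl|rfl|rfl <;>
    rcases fin4cases k with rfl|rfl|rfl|rfl <;>
    · simp only [Fin.sum_univ_four]
      simp only [eps4_0000, eps4_0001, eps4_0002, eps4_0003, eps4_0010, eps4_0011, eps4_0012, eps4_0013, eps4_0020, eps4_0021, eps4_0022, eps4_0023, eps4_0030, eps4_0031, eps4_0032, eps4_0033, eps4_0100, eps4_0101, eps4_0102, eps4_0103, eps4_0110, eps4_0111, eps4_0112, eps4_0113, eps4_0120, eps4_0121, eps4_0122, eps4_0123, eps4_0130, eps4_0131, eps4_0132, eps4_0133, eps4_0200, eps4_0201, eps4_0202, eps4_0203, eps4_0210, eps4_0211, eps4_0212, eps4_0213, eps4_0220, eps4_0221, eps4_0222, eps4_0223, eps4_0230, eps4_0231, eps4_0232, eps4_0233, eps4_0300, eps4_0301, eps4_0302, eps4_0303, eps4_0310, eps4_0311, eps4_0312, eps4_0313, eps4_0320, eps4_0321,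 eps4_0322, eps4_0323, eps4_0330, eps4_0331, eps4_0332, eps4_0333, eps4_1000, eps4_1001, eps4_1002, eps4_1003, eps4_1010, eps4_1011, eps4_1012, eps4_1013, eps4_1020, eps4_1021, eps4_1022, eps4_1023, eps4_1030, eps4_1031, eps4_1032, eps4_1033, eps4_1100, eps4_1101, eps4_1102, eps4_1103, eps4_1110, eps4_1111, eps4_1112, eps4_1113, eps4_1120, eps4_1121, eps4_1122, eps4_1123, eps4_1130, eps4_1131, eps4_1132, eps4_1133, eps4_1200, eps4_1201, eps4_1202, eps4_1203, eps4_1210, eps4_1211, eps4_1212, eps4_1213, eps4_1220, eps4_1221, eps4_1222, eps4_1223, eps4_1230, eps4_1231, eps4_1232, eps4_1233, eps4_1300, eps4_1301, eps4_1302, eps4_1303, eps4_1310, eps4_1311, eps4_1312, eps4_1313, eps4_1320, eps4_1321, eps4_1322, eps4_1323, eps4_1330, eps4_1331, eps4_1332, eps4_1333, eps4_2000, eps4_2001, eps4_2002, eps4_2003, eps4_2010, eps4_2011, eps4_2012, eps4_2013, eps4_2020, eps4_2021, eps4_2022, eps4_2023, eps4_2030, eps4_2031, eps4_2032, eps4_2033,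 eps4_2100, eps4_2101, eps4_2102, eps4_2103, eps4_2110, eps4_2111, eps4_2112, eps4_2113, eps4_2120, eps4_2121, eps4_2122, eps4_2123, eps4_2130, eps4_2131, eps4_2132, eps4_2133, eps4_2200, eps4_2201, eps4_2202, eps4_2203, eps4_2210, eps4_2211, eps4_2212, eps4_2213, eps4_2220, eps4_2221, eps4_2222, eps4_2223, eps4_2230, eps4_2231, eps4_2232, eps4_2233, eps4_2300, eps4_2301, eps4_2302, eps4_2303, eps4_2310, eps4_2311, eps4_2312, eps4_2313, eps4_2320, eps4_2321, eps4_2322, eps4_2323, eps4_2330, eps4_2331, eps4_2332, eps4_2333, eps4_3000, eps4_3001, eps4_3002, eps4_3003, eps4_3010, eps4_3011, eps4_3012, eps4_3013, eps4_3020, eps4_3021, eps4_3022, eps4_3023, eps4_3030, eps4_3031, eps4_3032, eps4_3033, eps4_3100, eps4_3101, eps4_3102, eps4_3103, eps4_3110, eps4_3111, eps4_3112, eps4_3113, eps4_3120, eps4_3121, eps4_3122, eps4_3123, eps4_3130, eps4_3131, eps4_3132, eps4_3133, eps4_3200, eps4_3201, eps4_3202, eps4_3203, eps4_3210, eps4_3211,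 eps4_3212, eps4_3213, eps4_3220, eps4_3221, eps4_3222, eps4_3223, eps4_3230, eps4_3231, eps4_3232, eps4_3233, eps4_3300, eps4_3301, eps4_3302, eps4_3303, eps4_3310, eps4_3311, eps4_3312, eps4_3313, eps4_3320, eps4_3321, eps4_3322, eps4_3323, eps4_3330, eps4_3331, eps4_3332, eps4_3333]
      ring

set_option maxHeartbeats 3200000 in
lemma act_hodge (g : Matrix (Fin 4) (Fin 4) ℝ) (ξ α : Fin 4 → ℝ) (j k : Fin 4) :
    act (hodge g) (wcov ξ α) j k =
      Real.sqrt |g.det| * ∑ a, ∑ b, Uv g ξ a * Uv g α b * eps4 a b j k := by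
  rcases fin4cases j with rfl|rfl|rfl|rfl <;> rcases fin4cases k with rfl|rfl|rfl|rfl <;>
    · simp only [act, hodge, wcov, Uv, Fin.sum_univ_four]
      simp only [eps4_0000, eps4_0001, eps4_0002, eps4_0003, eps4_0010, eps4_0011, eps4_0012, eps4_0013, eps4_0020, eps4_0021, eps4_0022, eps4_0023, eps4_0030, eps4_0031, eps4_0032, eps4_0033, eps4_0100, eps4_0101, eps4_0102, eps4_0103, eps4_0110, eps4_0111, eps4_0112, eps4_0113, eps4_0120, eps4_0121, eps4_0122, eps4_0123, eps4_0130, eps4_0131, eps4_0132, eps4_0133, eps4_0200, eps4_0201, eps4_0202, eps4_0203, eps4_0210, eps4_0211, eps4_0212, eps4_0213, eps4_0220, eps4_0221, eps4_0222, eps4_0223, eps4_0230, eps4_0231, eps4_0232, eps4_0233, eps4_0300, eps4_0301, eps4_0302, eps4_0303, eps4_0310, eps4_0311, eps4_0312, eps4_0313, eps4_0320, eps4_0321, eps4_0322, eps4_0323, eps4_0330, eps4_0331, eps4_0332, eps4_0333, eps4_1000, eps4_1001, eps4_1002, eps4_1003, eps4_1010, eps4_1011, eps4_1012, eps4_1013,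 eps4_1020, eps4_1021, eps4_1022, eps4_1023, eps4_1030, eps4_1031, eps4_1032, eps4_1033, eps4_1100, eps4_1101, eps4_1102, eps4_1103, eps4_1110, eps4_1111, eps4_1112, eps4_1113, eps4_1120, eps4_1121, eps4_1122, eps4_1123, eps4_1130, eps4_1131, eps4_1132, eps4_1133, eps4_1200, eps4_1201, eps4_1202, eps4_1203, eps4_1210, eps4_1211, eps4_1212, eps4_1213, eps4_1220, eps4_1221, eps4_1222, eps4_1223, eps4_1230, eps4_1231, eps4_1232, eps4_1233, eps4_1300, eps4_1301, eps4_1302, eps4_1303, eps4_1310, eps4_1311, eps4_1312, eps4_1313, eps4_1320, eps4_1321, eps4_1322, eps4_1323, eps4_1330, eps4_1331, eps4_1332, eps4_1333, eps4_2000, eps4_2001, eps4_2002, eps4_2003, eps4_2010, eps4_2011, eps4_2012, eps4_2013, eps4_2020, eps4_2021, eps4_2022, eps4_2023, eps4_2030, eps4_2031, eps4_2032, eps4_2033, eps4_2100, eps4_2101, eps4_2102, eps4_2103, eps4_2110, eps4_2111, eps4_2112, eps4_2113, eps4_2120, eps4_2121, eps4_2122, eps4_2123, eps4_2130, eps4_2131,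 eps4_2132, eps4_2133, eps4_2200, eps4_2201, eps4_2202, eps4_2203, eps4_2210, eps4_2211, eps4_2212, eps4_2213, eps4_2220, eps4_2221, eps4_2222, eps4_2223, eps4_2230, eps4_2231, eps4_2232, eps4_2233, eps4_2300, eps4_2301, eps4_2302, eps4_2303, eps4_2310, eps4_2311, eps4_2312, eps4_2313, eps4_2320, eps4_2321, eps4_2322, eps4_2323, eps4_2330, eps4_2331, eps4_2332, eps4_2333, eps4_3000, eps4_3001, eps4_3002, eps4_3003, eps4_3010, eps4_3011, eps4_3012, eps4_3013, eps4_3020, eps4_3021, eps4_3022, eps4_3023, eps4_3030, eps4_3031, eps4_3032, eps4_3033, eps4_3100, eps4_3101, eps4_3102, eps4_3103, eps4_3110, eps4_3111, eps4_3112, eps4_3113, eps4_3120, eps4_3121, eps4_3122, eps4_3123, eps4_3130, eps4_3131, eps4_3132, eps4_3133, eps4_3200, eps4_3201, eps4_3202, eps4_3203, eps4_3210, eps4_3211, eps4_3212, eps4_3213, eps4_3220, eps4_3221, eps4_3222, eps4_3223, eps4_3230, eps4_3231, eps4_3232, eps4_3233, eps4_3300, eps4_3301, eps4_3302, eps4_3303,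 eps4_3310, eps4_3311, eps4_3312, eps4_3313, eps4_3320, eps4_3321, eps4_3322, eps4_3323, eps4_3330, eps4_3331, eps4_3332, eps4_3333]
      ring

lemma Lfun_eq (g : Matrix (Fin 4) (Fin 4) ℝ) (ξ α : Fin 4 → ℝ) (i j k : Fin 4) :
    Lfun (hodge g) ξ α i j k =
      Real.sqrt |g.det| * ∑ a,
        ((∑ b, Uv g α b * ξ b) * Uv g ξ a - (∑ b, Uv g ξ b * ξ b) * Uv g α a) *
          eps4 a i j k := by
  simp only [Lfun, act_hodge]
  rw [← eps4_key (Uv g ξ) (Uv g α) ξ i j k]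
  ring

lemma Lfun_eq' (g : Matrix (Fin 4) (Fin 4) ℝ) (ξ α : Fin 4 → ℝ) (i j k : Fin 4) :
    Lfun (hodge g) ξ α i j k =
      Real.sqrt |g.det| * ∑ a,
        (gform g α ξ * Uv g ξ a - gform g ξ ξ * Uv g α a) * eps4 a i j k := by
  rw [Lfun_eq, gform_eq g α ξ, gform_eq g ξ ξ]

lemma mem_ker_iff (g : Matrix (Fin 4) (Fin 4) ℝ) (hdet : IsUnit g.det) (ξ α : Fin 4 → ℝ) :
    Lmap (hodge g) ξ α = 0 ↔
      ∀ a, gform g α ξ * Uv g ξ a = gform g ξ ξ * Uv g α a := by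
  have hs : Real.sqrt |g.det| ≠ 0 := ne_of_gt (Real.sqrt_pos.mpr (abs_pos.mpr hdet.ne_zero))
  constructor
  · intro h a
    have hL : ∀ i j k, Lfun (hodge g) ξ α i j k = 0 := fun i j k => by
      have := congrFun (congrFun (congrFun h i) j) k
      simpa [Lmap] using this
    have hS : ∀ i j k,
        ∑ b, (gform g α ξ * Uv g ξ b - gform g ξ ξ * Uv g α b) * eps4 b i j k = 0 := by
      intro i j k
      have h2 := (Lfun_eq' g ξ α i j k).symm.trans (hL i j k)
      rcases mul_eq_zero.mp h2 with h3 | h3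
      · exact absurd h3 hs
      · exact h3
    rcases fin4cases a with rfl | rfl | rfl | rfl
    · have := hS 1 2 3
      simp only [Fin.sum_univ_four, eps4_0123, eps4_1123, eps4_2123, eps4_3123] at this
      linarith [this]
    · have := hS 0 2 3
      simp only [Fin.sum_univ_four, eps4_0023, eps4_1023, eps4_2023, eps4_3023] at this
      linarith [this]
    · have := hS 0 1 3
      simp only [Fin.sum_univ_four, eps4_0013, eps4_1013, eps4_2013, eps4_3013] at this
      linarith [this]
    · have := hS 0 1 2
      simp only [Fin.sum_univ_four, eps4_0012, eps4_1012, eps4_2012, eps4_3012] at this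
      linarith [this]
  · intro h
    funext i j k
    show Lfun (hodge g) ξ α i j k = 0
    rw [Lfun_eq']
    have hz : ∀ b, gform g α ξ * Uv g ξ b - gform g ξ ξ * Uv g α b = 0 :=
      fun b => sub_eq_zero.mpr (h b)
    simp [hz]
/-- For the Hodge star medium tensor `κ = *_g` of an invertible symmetric `g`
and nonzero `ξ`, the kernel of `L_ξ : α ↦ ξ ∧ κ(ξ ∧ α)` has dimension 3 when `g(ξ,ξ) = 0`,
and dimension 1 -- namely `ker L_ξ = span ξ` -- when `g(ξ,ξ) ≠ 0`. -/
theorem hodge_kernel_dimension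
    (g : Matrix (Fin 4) (Fin 4) ℝ) (hsymm : g.IsSymm) (hdet : IsUnit g.det)
    (ξ : Fin 4 → ℝ) (hξ : ξ ≠ 0) :
    (gform g ξ ξ = 0 →
        Module.finrank ℝ (LinearMap.ker (Lmap (hodge g) ξ)) = 3) ∧
      (gform g ξ ξ ≠ 0 →
        Module.finrank ℝ (LinearMap.ker (Lmap (hodge g) ξ)) = 1 ∧
          LinearMap.ker (Lmap (hodge g) ξ) = Submodule.span ℝ {ξ}) := by
  constructor
  · -- null case: kernel has dimension 3
    intro h0
    set w : Fin 4 → ℝ := g⁻¹ *ᵥ ξ with hw_def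
    have hw : w ≠ 0 := by
      intro hw0
      apply hξ
      have h1 : g *ᵥ w = g *ᵥ (0 : Fin 4 → ℝ) := by rw [hw0]
      rw [hw_def, Matrix.mulVec_mulVec, Matrix.mul_nonsing_inv g hdet, Matrix.one_mulVec,
        Matrix.mulVec_zero] at h1
      exact h1
    have hww : w ⬝ᵥ w ≠ 0 := fun h => hw (dotProduct_self_eq_zero.mp h)
    set φ : (Fin 4 → ℝ) →ₗ[ℝ] ℝ :=
      { toFun := fun α => α ⬝ᵥ w
        map_add' := fun a b => add_dotProduct a b w
        map_smul' := fun c a => smul_dotProduct c a w } with hφ_def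
    have hgf : ∀ α : Fin 4 → ℝ, gform g α ξ = α ⬝ᵥ w := by
      intro α
      rw [gform, hw_def]
      simp only [dotProduct, Matrix.mulVec, Finset.mul_sum]
      exact Finset.sum_congr rfl fun i _ => Finset.sum_congr rfl fun j _ => by ring
    have hUξ : ∃ a, Uv g ξ a ≠ 0 := by
      by_contra hc
      push_neg at hc
      apply hξ
      have hU : ξ ᵥ* g⁻¹ = 0 := by
        funext a
        rw [← Uv_eq_vecMul]
        exact hc a
      have : (ξ ᵥ* g⁻¹) ᵥ* g = ξ := by
        rw [Matrix.vecMul_vecMul, Matrix.nonsing_inv_mul g hdet, Matrix.vecMul_one]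
      rw [hU] at this
      rw [← this]
      simp [Matrix.zero_vecMul]
    have hker : LinearMap.ker (Lmap (hodge g) ξ) = LinearMap.ker φ := by
      ext α
      simp only [LinearMap.mem_ker]
      rw [mem_ker_iff g hdet]
      constructor
      · intro h
        obtain ⟨a, ha⟩ := hUξ
        have h2 := h a
        rw [h0, zero_mul] at h2
        have h3 : gform g α ξ = 0 := (mul_eq_zero.mp h2).resolve_right ha
        show α ⬝ᵥ w = 0
        rw [← hgf]
        exact h3
      · intro h a
        have h3 : gform g α ξ = 0 := by rw [hgf]; exact h
        rw [h0, h3, zero_mul, zero_mul]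
    rw [hker]
    have hrange : LinearMap.range φ = ⊤ := by
      rw [eq_top_iff]
      rintro x -
      refine ⟨(x / (w ⬝ᵥ w)) • w, ?_⟩
      show ((x / (w ⬝ᵥ w)) • w) ⬝ᵥ w = x
      rw [smul_dotProduct, smul_eq_mul, div_mul_cancel₀ x hww]
    have hsum := LinearMap.finrank_range_add_finrank_ker φ
    rw [hrange, finrank_top] at hsum
    have h4 : Module.finrank ℝ (Fin 4 → ℝ) = 4 := by
      simp [Module.finrank_fintype_fun_eq_card]
    have h1 : Module.finrank ℝ ℝ = 1 := Module.finrank_self ℝ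
    rw [h4, h1] at hsum
    omega
  · -- non-null case
    intro h1
    have hker : LinearMap.ker (Lmap (hodge g) ξ) = Submodule.span ℝ {ξ} := by
      apply le_antisymm
      · intro α hα
        rw [LinearMap.mem_ker, mem_ker_iff g hdet] at hα
        rw [Submodule.mem_span_singleton]
        refine ⟨gform g α ξ / gform g ξ ξ, ?_⟩
        have hv : α ᵥ* g⁻¹ = (gform g α ξ / gform g ξ ξ) • (ξ ᵥ* g⁻¹) := by
          rw [← Uv_eq_vecMul, ← Uv_eq_vecMul]
          funext a
          have h2 := hα a
          show Uv g α a = (gform g α ξ / gform g ξ ξ) * Uv g ξ a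
          field_simp
          linarith [h2]
        have h3 := congrArg (fun v => v ᵥ* g) hv
        rw [Matrix.smul_vecMul] at h3
        simp only [Matrix.vecMul_vecMul, Matrix.nonsing_inv_mul g hdet,
          Matrix.vecMul_one] at h3
        exact h3.symm
      · rw [Submodule.span_singleton_le_iff_mem, LinearMap.mem_ker, mem_ker_iff g hdet]
        intro a
        rfl
    exact ⟨by rw [hker]; exact finrank_span_singleton hξ, hker⟩
end
end

section
/- Let κ be a medium tensor on ℝ⁴. Then the following are equivalent: (1) κ is of axion type, i.e. κ = c · Id for some real c; (2) ξ ∧ κ(ξ∧α) = 0 for all covectors ξ, α ∈ ℝ⁴ (equivalently, ker L_ξ is all of ℝ⁴ for every ξ). Moreover, when these hold, κ = (1/6)(trace κ) · Id, where trace κ = ½ κ^{ij}_{ij}. -/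
open scoped BigOperators
open Matrix

noncomputable section

/-- The identity endomorphism of 2-forms: `Id^{ij}_{rs} = δ^i_r δ^j_s - δ^i_s δ^j_r`. -/
def idm (i j r s : Fin 4) : ℝ :=
  (if i = r ∧ j = s then 1 else 0) - (if i = s ∧ j = r then 1 else 0)


/-! ### Auxiliary machinery -/

/-- Basis covector. -/
def dc (a : Fin 4) : Fin 4 → ℝ := fun t => if t = a then 1 else 0

lemma sum_dc2 (f : Fin 4 → Fin 4 → ℝ) (a b : Fin 4) :
    (∑ r, ∑ s, f r s * (dc a r * dc b s - dc a s * dc b r)) = f a b - f b a := by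
  simp [dc, mul_sub, Finset.sum_sub_distrib, mul_ite, mul_one, mul_zero, ite_mul, zero_mul,
    Finset.sum_ite_eq, Finset.sum_ite_eq', mul_comm]

lemma sum_idm (f : Fin 4 → Fin 4 → ℝ) (m n : Fin 4) :
    (∑ r, ∑ s, idm r s m n * f r s) = f m n - f n m := by
  simp [idm, sub_mul, ite_and, Finset.sum_sub_distrib, ite_mul, one_mul, zero_mul,
    Finset.sum_ite_eq, Finset.sum_ite_eq']

lemma act_wcov_dc (κ : Fin 4 → Fin 4 → Fin 4 → Fin 4 → ℝ) (hκ : IsMedium κ) (a b m n : Fin 4) :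
    act κ (wcov (dc a) (dc b)) m n = κ a b m n := by
  have hs := sum_dc2 (fun r s => κ r s m n) a b
  have h1 := hκ.1 a b m n
  simp only [act, wcov]
  rw [hs]
  linarith

lemma act_add (κ : Fin 4 → Fin 4 → Fin 4 → Fin 4 → ℝ) (F G : Fin 4 → Fin 4 → ℝ) (i j : Fin 4) :
    act κ (fun r s => F r s + G r s) i j = act κ F i j + act κ G i j := by
  simp only [act, mul_add, Finset.sum_add_distrib]

lemma Lfun_dc (κ : Fin 4 → Fin 4 → Fin 4 → Fin 4 → ℝ) (hκ : IsMedium κ) (a b i j k : Fin 4) :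
    Lfun κ (dc a) (dc b) i j k
      = dc a i * κ a b j k + dc a j * κ a b k i + dc a k * κ a b i j := by
  simp only [Lfun, act_wcov_dc κ hκ]

lemma wcov_add_eq (p q b : Fin 4) :
    wcov (fun t => dc p t + dc q t) (dc b)
      = fun i j => wcov (dc p) (dc b) i j + wcov (dc q) (dc b) i j := by
  funext i j
  simp only [wcov]
  ring

lemma Lfun_dc2 (κ : Fin 4 → Fin 4 → Fin 4 → Fin 4 → ℝ) (hκ : IsMedium κ) (p q b i j k : Fin 4) :
    Lfun κ (fun t => dc p t + dc q t) (dc b) i j k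
      = (dc p i + dc q i) * (κ p b j k + κ q b j k)
        + (dc p j + dc q j) * (κ p b k i + κ q b k i)
        + (dc p k + dc q k) * (κ p b i j + κ q b i j) := by
  simp only [Lfun, wcov_add_eq, act_add, act_wcov_dc κ hκ]

/-- A medium tensor `κ` is of axion type (`κ = c · Id` for some real `c`)
if and only if `ξ ∧ κ(ξ ∧ α) = 0` for all covectors `ξ, α`; moreover, when this holds,
`κ = (1/6)(trace κ) · Id`. -/
theorem axion_iff_L_vanishes
    (κ : Fin 4 → Fin 4 → Fin 4 → Fin 4 → ℝ) (hκ : IsMedium κ) :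
    ((∃ c : ℝ, ∀ i j k l, κ i j k l = c * idm i j k l) ↔
        (∀ ξ α : Fin 4 → ℝ, ∀ i j k, Lfun κ ξ α i j k = 0)) ∧
      ((∀ ξ α : Fin 4 → ℝ, ∀ i j k, Lfun κ ξ α i j k = 0) →
        ∀ i j k l, κ i j k l = (1 / 6) * mtrace κ * idm i j k l) := by
  
  classical
  -- antisymmetry facts
  have hup := hκ.1
  have hlo := hκ.2
  -- Main implication: vanishing of L forces axion form with c = κ 0 1 0 1.
  have main : (∀ ξ α : Fin 4 → ℝ, ∀ i j k, Lfun κ ξ α i j k = 0) →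
      ∀ i j k l, κ i j k l = κ 0 1 0 1 * idm i j k l ∧ mtrace κ = 6 * κ 0 1 0 1 := by
    intro h
    set c := κ 0 1 0 1 with hc
    -- Z : first upper index must appear among lower indices
    have Z : ∀ a b j k : Fin 4, a ≠ j → a ≠ k → κ a b j k = 0 := by
      intro a b j k haj hak
      have h1 := h (dc a) (dc b) a j k
      rw [Lfun_dc κ hκ] at h1
      simp [dc, Ne.symm haj, Ne.symm hak] at h1
      exact h1
    have Z2 : ∀ a b j k : Fin 4, b ≠ j → b ≠ k → κ a b j k = 0 := by
      intro a b j k hbj hbk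
      have := Z b a j k hbj hbk
      have := hup a b j k
      linarith
    -- R : κ q r q r = κ p r p r for distinct p q r
    have R : ∀ p q r : Fin 4, p ≠ q → p ≠ r → q ≠ r → κ q r q r = κ p r p r := by
      intro p q r hpq hpr hqr
      have h2 := h (fun t => dc p t + dc q t) (dc r) r p q
      rw [Lfun_dc2 κ hκ] at h2
      simp [dc, Ne.symm hpr, Ne.symm hqr, hpq, Ne.symm hpq] at h2
      have z1 : κ p r q r = 0 := Z p r q r hpq hpr
      have z2 : κ q r r p = 0 := Z q r r p hqr (Ne.symm hpq)
      have z3 : κ p r r p = - κ p r p r := by have := hlo p r r p; have := hlo p r p r; linarith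
      linarith
    have sym : ∀ a b : Fin 4, κ a b a b = κ b a b a := by
      intro a b
      have h1 := hup a b a b
      have h2 := hlo b a a b
      have h3 := hup b a a b
      linarith [hlo a b a b, hup b a b a]
    -- all diagonal values equal c
    have c21 : κ 2 1 2 1 = c := R 0 2 1 (by decide) (by decide) (by decide)
    have c31 : κ 3 1 3 1 = c := R 0 3 1 (by decide) (by decide) (by decide)
    have c12 : κ 1 2 1 2 = c := by rw [sym 1 2]; exact c21
    have c13 : κ 1 3 1 3 = c := by rw [sym 1 3]; exact c31
    have c02 : κ 0 2 0 2 = c := by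
      have := R 1 0 2 (by decide) (by decide) (by decide); linarith
    have c32 : κ 3 2 3 2 = c := by
      have := R 1 3 2 (by decide) (by decide) (by decide); linarith
    have c03 : κ 0 3 0 3 = c := by
      have := R 1 0 3 (by decide) (by decide) (by decide); linarith
    have c23 : κ 2 3 2 3 = c := by rw [sym 2 3]; exact c32
    have c10 : κ 1 0 1 0 = c := by rw [sym 1 0]
    have c20 : κ 2 0 2 0 = c := by rw [sym 2 0]; exact c02
    have c30 : κ 3 0 3 0 = c := by rw [sym 3 0]; exact c03
    have cEq : ∀ a b : Fin 4, a ≠ b → κ a b a b = c := by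
      intro a b hab
      fin_cases a <;> fin_cases b <;>
        first
          | exact absurd rfl hab
          | exact hc.symm
          | exact c21 | exact c31 | exact c12 | exact c13 | exact c02 | exact c32
          | exact c03 | exact c23 | exact c10 | exact c20 | exact c30
    have diag : ∀ a b c' d : Fin 4, a = b → κ a b c' d = 0 := by
      intro a b c' d hab
      subst hab
      have := hup a a c' d; linarith
    have diag2 : ∀ a b c' d : Fin 4, c' = d → κ a b c' d = 0 := by
      intro a b c' d hcd
      subst hcd
      have := hlo a b c' c'; linarith
    -- pointwise formula
    have key : ∀ i j k l, κ i j k l = c * idm i j k l := by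
      intro i j k l
      by_cases hij : i = j
      · rw [diag i j k l hij]
        have : idm i j k l = 0 := by subst hij; simp [idm, and_comm]
        rw [this]; ring
      by_cases hkl : k = l
      · rw [diag2 i j k l hkl]
        have : idm i j k l = 0 := by subst hkl; simp [idm]
        rw [this]; ring
      by_cases hik : i = k
      · by_cases hjl : j = l
        · subst hik; subst hjl
          have : idm i j i j = 1 := by simp [idm, hij]
          rw [this, cEq i j hij]; ring
        · have hjk : j ≠ k := by rintro rfl; exact hij hik
          rw [Z2 i j k l hjk hjl]
          have : idm i j k l = 0 := by simp [idm, hjl, hjk]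
          rw [this]; ring
      by_cases hil : i = l
      · by_cases hjk : j = k
        · subst hil; subst hjk
          have h1 : κ i j j i = - κ i j i j := by
            have := hlo i j j i; have := hlo i j i j; linarith
          have : idm i j j i = -1 := by simp [idm, hij, Ne.symm hij]
          rw [this, h1, cEq i j hij]; ring
        · have hjl : j ≠ l := by rintro rfl; exact hij hil
          rw [Z2 i j k l hjk hjl]
          have : idm i j k l = 0 := by simp [idm, hik, hjk]
          rw [this]; ring
      · rw [Z i j k l hik hil]
        have : idm i j k l = 0 := by simp [idm, hik, hil]
        rw [this]; ring
    have tr : mtrace κ = 6 * c := by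
      have d0 := diag 0 0 0 0 rfl
      have d1 := diag 1 1 1 1 rfl
      have d2 := diag 2 2 2 2 rfl
      have d3 := diag 3 3 3 3 rfl
      simp only [mtrace, Fin.sum_univ_four]
      linarith [c10, c20, c30, c12, c13, c23, c21, c31, c32, c02, c03,
        cEq 0 1 (by decide)]
    exact fun i j k l => ⟨key i j k l, tr⟩
  constructor
  · constructor
    · rintro ⟨c0, hc⟩ ξ α i j k
      have hact : ∀ m n, act κ (wcov ξ α) m n = c0 * wcov ξ α m n := by
        intro m n
        have hκeq : (fun r s => κ r s m n) = fun r s => c0 * idm r s m n := by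
          funext r s; exact hc r s m n
        have hs := sum_idm (wcov ξ α) m n
        have : (∑ r, ∑ s, κ r s m n * wcov ξ α r s)
            = c0 * (wcov ξ α m n - wcov ξ α n m) := by
          rw [← hs]
          rw [Finset.mul_sum]
          refine Finset.sum_congr rfl fun r _ => ?_
          rw [Finset.mul_sum]
          refine Finset.sum_congr rfl fun s _ => ?_
          rw [hc r s m n]; ring
        have halt : wcov ξ α n m = - wcov ξ α m n := by simp only [wcov]; ring
        simp only [act, this, halt]
        ring
      simp only [Lfun, hact, wcov]
      ring
    · intro h
      exact ⟨κ 0 1 0 1, fun i j k l => (main h i j k l).1⟩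
  · intro h i j k l
    have := main h i j k l
    rw [this.1, this.2]
    ring


end
end

section
/- Let g and h be invertible symmetric real 4×4 matrices of Lorentzian signature. Then the following are equivalent: (1) there exists a nonzero real λ with h = λ g; (2) *_g = *_h, i.e. the Hodge star medium tensors of g and h have equal components; (3) g and h have the same null cones: {x ∈ ℝ⁴ : g_{ij} x^i x^j = 0} = {x ∈ ℝ⁴ : h_{ij} x^i x^j = 0}. -/
open scoped BigOperators
open Matrix

noncomputable section

/-- Auxiliary: inverse of a scalar multiple of a matrix. -/
theorem aux_smul_inv (l : ℝ) (hl : l ≠ 0) (g : Matrix (Fin 4) (Fin 4) ℝ) (hg : IsUnit g.det) :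
    (l • g)⁻¹ = l⁻¹ • g⁻¹ := by
  apply Matrix.inv_eq_right_inv
  rw [smul_mul_smul_comm, mul_inv_cancel₀ hl, Matrix.mul_nonsing_inv _ hg, one_smul]

/-- Auxiliary: the Hodge star is conformally invariant. -/
theorem aux_hodge_smul (l : ℝ) (hl : l ≠ 0) (g : Matrix (Fin 4) (Fin 4) ℝ) (hg : IsUnit g.det)
    (i j r s : Fin 4) : hodge (l • g) i j r s = hodge g i j r s := by
  have hinv : (l • g)⁻¹ = l⁻¹ • g⁻¹ := aux_smul_inv l hl g hg
  have hdet : |(l • g).det| = l ^ 4 * |g.det| := by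
    simp only [Matrix.det_smul, Fintype.card_fin, abs_mul]
    congr 1
    exact abs_of_nonneg (by positivity)
  have hsq : Real.sqrt (l ^ 4 * |g.det|) = l ^ 2 * Real.sqrt |g.det| := by
    rw [show l ^ 4 = (l ^ 2) ^ 2 by ring, Real.sqrt_mul (sq_nonneg _), Real.sqrt_sq_eq_abs,
      abs_of_nonneg (sq_nonneg _)]
  unfold hodge
  rw [hdet, hsq, hinv]
  simp only [Matrix.smul_apply, smul_eq_mul, Fin.sum_univ_four]
  field_simp

/-- Auxiliary: equality of Hodge stars gives equality of weighted 2×2 minors of inverses. -/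
theorem aux_minors (g h : Matrix (Fin 4) (Fin 4) ℝ)
    (he : ∀ i j r s, hodge g i j r s = hodge h i j r s) (i j k l : Fin 4) :
    Real.sqrt |g.det| * (g⁻¹ i k * g⁻¹ j l - g⁻¹ i l * g⁻¹ j k)
      = Real.sqrt |h.det| * (h⁻¹ i k * h⁻¹ j l - h⁻¹ i l * h⁻¹ j k) := by
  have e1 := he i j 2 3
  have e2 := he i j 1 3
  have e3 := he i j 1 2
  have e4 := he i j 0 3
  have e5 := he i j 0 2
  have e6 := he i j 0 1
  simp only [hodge, Fin.sum_univ_four] at e1 e2 e3 e4 e5 e6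
  norm_num [eps4, show ((0:Fin 4):ℕ) = 0 from rfl, show ((1:Fin 4):ℕ) = 1 from rfl,
    show ((2:Fin 4):ℕ) = 2 from rfl, show ((3:Fin 4):ℕ) = 3 from rfl] at e1 e2 e3 e4 e5 e6
  have hk4 : ∀ m : Fin 4, m = 0 ∨ m = 1 ∨ m = 2 ∨ m = 3 := by decide
  rcases hk4 k with rfl|rfl|rfl|rfl <;> rcases hk4 l with rfl|rfl|rfl|rfl
  · ring1
  · linear_combination e1
  · linear_combination -e2
  · linear_combination e3
  · linear_combination -e1
  · ring1
  · linear_combination e4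
  · linear_combination -e5
  · linear_combination e2
  · linear_combination -e4
  · ring1
  · linear_combination e6
  · linear_combination -e3
  · linear_combination e5
  · linear_combination -e6
  · ring1

/-- Auxiliary: a matrix is determined up to sign by its second exterior power. -/
theorem aux_lambda2_rigid (A B : Matrix (Fin 4) (Fin 4) ℝ) (hA : IsUnit A.det)
    (hmin : ∀ i j k l, A i k * A j l - A i l * A j k = B i k * B j l - B i l * B j k) :
    B = A ∨ B = -A := by
  have hAi : A * A⁻¹ = 1 := Matrix.mul_nonsing_inv A hA
  set C := B * A⁻¹ with hCdef
  have key : ∀ i j m n, C i m * C j n - C i n * C j m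
      = (1 : Matrix (Fin 4) (Fin 4) ℝ) i m * (1 : Matrix (Fin 4) (Fin 4) ℝ) j n
        - (1 : Matrix (Fin 4) (Fin 4) ℝ) i n * (1 : Matrix (Fin 4) (Fin 4) ℝ) j m := by
    intro i j m n
    rw [← hAi]
    have hm := fun k l => hmin i j k l
    simp only [hCdef, Matrix.mul_apply, Fin.sum_univ_four]
    linear_combination (-1 : ℝ) * ((A⁻¹ 0 m * A⁻¹ 0 n) * hm 0 0 + (A⁻¹ 0 m * A⁻¹ 1 n) * hm 0 1 +
      (A⁻¹ 0 m * A⁻¹ 2 n) * hm 0 2 + (A⁻¹ 0 m * A⁻¹ 3 n) * hm 0 3 +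
      (A⁻¹ 1 m * A⁻¹ 0 n) * hm 1 0 + (A⁻¹ 1 m * A⁻¹ 1 n) * hm 1 1 +
      (A⁻¹ 1 m * A⁻¹ 2 n) * hm 1 2 + (A⁻¹ 1 m * A⁻¹ 3 n) * hm 1 3 +
      (A⁻¹ 2 m * A⁻¹ 0 n) * hm 2 0 + (A⁻¹ 2 m * A⁻¹ 1 n) * hm 2 1 +
      (A⁻¹ 2 m * A⁻¹ 2 n) * hm 2 2 + (A⁻¹ 2 m * A⁻¹ 3 n) * hm 2 3 +
      (A⁻¹ 3 m * A⁻¹ 0 n) * hm 3 0 + (A⁻¹ 3 m * A⁻¹ 1 n) * hm 3 1 +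
      (A⁻¹ 3 m * A⁻¹ 2 n) * hm 3 2 + (A⁻¹ 3 m * A⁻¹ 3 n) * hm 3 3)
  have hcompl : ∀ p q : Fin 4, p ≠ q → ∃ r s : Fin 4,
      r ≠ p ∧ r ≠ q ∧ s ≠ p ∧ s ≠ q ∧ r ≠ s := by decide
  have hod : ∀ p q : Fin 4, p ≠ q → C p q = 0 := by
    intro p q hpq
    obtain ⟨r, s, hrp, hrq, hsp, hsq, hrs⟩ := hcompl p q hpq
    have e1 := key p r q r
    have e2 := key p r q s
    have e3 := key p s q r
    have e4 := key p s q s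
    have e5 := key r s r s
    simp only [Matrix.one_apply, if_neg hpq, if_neg hrq, if_neg (Ne.symm hrp),
      if_neg (Ne.symm hsp), if_neg hsq, if_neg hrs, if_neg (Ne.symm hrs), if_pos rfl,
      if_true, mul_zero, zero_mul, mul_one, one_mul, sub_zero, zero_sub] at e1 e2 e3 e4 e5
    have hsq2 : C p q ^ 2 = 0 := by
      linear_combination (C p q * C s s) * e1 - (C p q * C s r) * e2
        - (C p s * C r q) * e3 + (C p r * C r q) * e4 - (C p q) ^ 2 * e5
    exact pow_eq_zero_iff (n := 2) (by norm_num) |>.mp hsq2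
  have d01 := key 0 1 0 1
  have d02 := key 0 2 0 2
  have d12 := key 1 2 1 2
  have d03 := key 0 3 0 3
  simp only [Matrix.one_apply, if_pos rfl, one_mul, mul_one] at d01 d02 d12 d03
  norm_num [hod 0 1, hod 1 0, hod 0 2, hod 2 0, hod 1 2, hod 2 1, hod 0 3, hod 3 0,
    (by decide : (0:Fin 4) ≠ 1), (by decide : (0:Fin 4) ≠ 2), (by decide : (1:Fin 4) ≠ 2),
    (by decide : (0:Fin 4) ≠ 3)] at d01 d02 d12 d03
  have h00 : C 0 0 ≠ 0 := by
    intro hz; rw [hz, zero_mul] at d01; exact one_ne_zero d01.symm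
  have h12 : C 1 1 = C 2 2 := mul_left_cancel₀ h00 (d01.trans d02.symm)
  have hsq : C 1 1 ^ 2 = 1 := by rw [sq]; nth_rewrite 2 [h12]; exact d12
  have h11 : C 1 1 ≠ 0 := by intro hz; rw [hz] at hsq; norm_num at hsq
  have h01 : C 0 0 = C 1 1 := by
    apply mul_right_cancel₀ h11
    rw [d01, ← sq, hsq]
  have h03 : C 3 3 = C 1 1 := by
    apply mul_left_cancel₀ h00
    rw [d03, h01, ← sq, hsq]
  have hCt : C = C 1 1 • (1 : Matrix (Fin 4) (Fin 4) ℝ) := by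
    ext i j
    by_cases hij : i = j
    · subst hij
      have hk4 : ∀ m : Fin 4, m = 0 ∨ m = 1 ∨ m = 2 ∨ m = 3 := by decide
      rcases hk4 i with rfl|rfl|rfl|rfl <;>
        simp [Matrix.smul_apply, Matrix.one_apply, h01, h12.symm, h03]
    · simp [hod i j hij, Matrix.smul_apply, Matrix.one_apply, hij]
  have hBA : B = C * A := by
    rw [hCdef, Matrix.mul_assoc, Matrix.nonsing_inv_mul A hA, Matrix.mul_one]
  have ht : C 1 1 = 1 ∨ C 1 1 = -1 := by
    have hfac : (C 1 1 - 1) * (C 1 1 + 1) = 0 := by linear_combination hsq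
    rcases mul_eq_zero.mp hfac with hv | hv
    · left; linarith
    · right; linarith
  rcases ht with hv | hv
  · left; rw [hBA, hCt, hv, one_smul, Matrix.one_mul]
  · right; rw [hBA, hCt, hv, Matrix.smul_mul, Matrix.one_mul, neg_smul, one_smul]

/-- Auxiliary: a symmetric matrix vanishing on the Minkowski null cone is a multiple
of the Minkowski metric. -/
theorem aux_nullcone_step (M : Matrix (Fin 4) (Fin 4) ℝ) (hM : M.IsSymm)
    (hnull : ∀ y : Fin 4 → ℝ, y 0 ^ 2 = y 1 ^ 2 + y 2 ^ 2 + y 3 ^ 2 →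
      ∑ i, ∑ j, M i j * y i * y j = 0) :
    M = M 0 0 • Matrix.diagonal ![(1:ℝ), -1, -1, -1] := by
  have s01 : M 1 0 = M 0 1 := hM.apply 0 1
  have s02 : M 2 0 = M 0 2 := hM.apply 0 2
  have s03 : M 3 0 = M 0 3 := hM.apply 0 3
  have s12 : M 2 1 = M 1 2 := hM.apply 1 2
  have s13 : M 3 1 = M 1 3 := hM.apply 1 3
  have s23 : M 3 2 = M 2 3 := hM.apply 2 3
  have e1 := hnull ![1,1,0,0] (by norm_num [Matrix.cons_val_two, Matrix.cons_val_three])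
  have e2 := hnull ![1,-1,0,0] (by norm_num [Matrix.cons_val_two, Matrix.cons_val_three])
  have e3 := hnull ![1,0,1,0] (by norm_num [Matrix.cons_val_two, Matrix.cons_val_three])
  have e4 := hnull ![1,0,-1,0] (by norm_num [Matrix.cons_val_two, Matrix.cons_val_three])
  have e5 := hnull ![1,0,0,1] (by norm_num [Matrix.cons_val_two, Matrix.cons_val_three])
  have e6 := hnull ![1,0,0,-1] (by norm_num [Matrix.cons_val_two, Matrix.cons_val_three])
  have e7 := hnull ![5,3,4,0] (by norm_num [Matrix.cons_val_two, Matrix.cons_val_three])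
  have e8 := hnull ![5,3,0,4] (by norm_num [Matrix.cons_val_two, Matrix.cons_val_three])
  have e9 := hnull ![5,0,3,4] (by norm_num [Matrix.cons_val_two, Matrix.cons_val_three])
  norm_num [Fin.sum_univ_four, Matrix.cons_val_two, Matrix.cons_val_three] at e1 e2 e3 e4 e5 e6 e7 e8 e9
  have hk4 : ∀ m : Fin 4, m = 0 ∨ m = 1 ∨ m = 2 ∨ m = 3 := by decide
  ext i j
  rcases hk4 i with rfl|rfl|rfl|rfl <;> rcases hk4 j with rfl|rfl|rfl|rfl <;>
    simp [Matrix.diagonal, Matrix.one_apply] <;>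
    linarith [e1, e2, e3, e4, e5, e6, e7, e8, e9, s01, s02, s03, s12, s13, s23]

/-- Auxiliary: congruence transformation of a quadratic form. -/
theorem aux_qf_congr (M P : Matrix (Fin 4) (Fin 4) ℝ) (y : Fin 4 → ℝ) :
    ∑ i, ∑ j, (Pᵀ * M * P) i j * y i * y j
      = ∑ i, ∑ j, M i j * (P.mulVec y) i * (P.mulVec y) j := by
  simp only [Matrix.mul_apply, Matrix.mulVec, dotProduct, Matrix.transpose_apply,
    Fin.sum_univ_four]
  ring

/-- For invertible symmetric Lorentzian 4×4 matrices `g, h`, the following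
are equivalent: (1) `h = λ g` for a nonzero real `λ`; (2) `*_g = *_h`; (3) `g` and `h`
have the same null cones `{x : g_{ij} x^i x^j = 0}`. -/
theorem lorentz_conformal_iff_hodge_iff_nullcone
    (g h : Matrix (Fin 4) (Fin 4) ℝ) (hg : g.IsSymm) (hh : h.IsSymm)
    (hgdet : IsUnit g.det) (hhdet : IsUnit h.det)
    (hgL : IsLorentzian g) (hhL : IsLorentzian h) :
    ((∃ l : ℝ, l ≠ 0 ∧ h = l • g) ↔
        (∀ i j r s, hodge g i j r s = hodge h i j r s)) ∧
      ((∃ l : ℝ, l ≠ 0 ∧ h = l • g) ↔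
        ({x : Fin 4 → ℝ | ∑ i, ∑ j, g i j * x i * x j = 0} =
          {x : Fin 4 → ℝ | ∑ i, ∑ j, h i j * x i * x j = 0})) := by
  have dir12 : (∃ l : ℝ, l ≠ 0 ∧ h = l • g) →
      (∀ i j r s, hodge g i j r s = hodge h i j r s) := by
    rintro ⟨l, hl, rfl⟩ i j r s
    exact (aux_hodge_smul l hl g hgdet i j r s).symm
  have dir21 : (∀ i j r s, hodge g i j r s = hodge h i j r s) →
      (∃ l : ℝ, l ≠ 0 ∧ h = l • g) := by
    intro he
    have hgne : g.det ≠ 0 := isUnit_iff_ne_zero.mp hgdet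
    have hhne : h.det ≠ 0 := isUnit_iff_ne_zero.mp hhdet
    have hcg : (0:ℝ) < Real.sqrt |g.det| := Real.sqrt_pos.mpr (abs_pos.mpr hgne)
    have hch : (0:ℝ) < Real.sqrt |h.det| := Real.sqrt_pos.mpr (abs_pos.mpr hhne)
    set u := Real.sqrt (Real.sqrt |g.det|) with hu_def
    set v := Real.sqrt (Real.sqrt |h.det|) with hv_def
    have hu : u * u = Real.sqrt |g.det| := Real.mul_self_sqrt hcg.le
    have hv : v * v = Real.sqrt |h.det| := Real.mul_self_sqrt hch.le
    have hune : u ≠ 0 := by positivity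
    have hvne : v ≠ 0 := by positivity
    set A := u • g⁻¹ with hA_def
    set B := v • h⁻¹ with hB_def
    have hgidet : IsUnit g⁻¹.det := by
      rw [isUnit_iff_ne_zero, Matrix.det_nonsing_inv]
      simpa using hgne
    have hAdet : IsUnit A.det := by
      rw [hA_def, isUnit_iff_ne_zero, Matrix.det_smul]
      have := isUnit_iff_ne_zero.mp hgidet
      positivity
    have hmin : ∀ i j k l, A i k * A j l - A i l * A j k
        = B i k * B j l - B i l * B j k := by
      intro i j k l
      have hm := aux_minors g h he i j k l
      simp only [hA_def, hB_def, Matrix.smul_apply, smul_eq_mul]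
      linear_combination hm + (g⁻¹ i k * g⁻¹ j l - g⁻¹ i l * g⁻¹ j k) * hu
        - (h⁻¹ i k * h⁻¹ j l - h⁻¹ i l * h⁻¹ j k) * hv
    have hsgn := aux_lambda2_rigid A B hAdet hmin
    have hstep : ∃ s : ℝ, s ≠ 0 ∧ h⁻¹ = s • g⁻¹ := by
      rcases hsgn with hBA | hBA
      · refine ⟨u / v, by positivity, ?_⟩
        have : v • h⁻¹ = u • g⁻¹ := by rw [← hA_def, ← hB_def, hBA]
        calc h⁻¹ = v⁻¹ • (v • h⁻¹) := by rw [inv_smul_smul₀ hvne]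
          _ = v⁻¹ • (u • g⁻¹) := by rw [this]
          _ = (u / v) • g⁻¹ := by rw [smul_smul]; congr 1; field_simp
      · refine ⟨-(u / v), neg_ne_zero.mpr (by positivity), ?_⟩
        have : v • h⁻¹ = -(u • g⁻¹) := by rw [← hA_def, ← hB_def, hBA]
        calc h⁻¹ = v⁻¹ • (v • h⁻¹) := by rw [inv_smul_smul₀ hvne]
          _ = v⁻¹ • (-(u • g⁻¹)) := by rw [this]
          _ = (-(u / v)) • g⁻¹ := by
              rw [smul_neg, smul_smul, ← neg_smul]; congr 1; field_simp
    obtain ⟨s, hsne, hsh⟩ := hstep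
    refine ⟨s⁻¹, inv_ne_zero hsne, ?_⟩
    have h1 : h = (h⁻¹)⁻¹ := (Matrix.nonsing_inv_nonsing_inv h hhdet).symm
    rw [h1, hsh, aux_smul_inv s hsne g⁻¹ hgidet, Matrix.nonsing_inv_nonsing_inv g hgdet]
  have dir13 : (∃ l : ℝ, l ≠ 0 ∧ h = l • g) →
      ({x : Fin 4 → ℝ | ∑ i, ∑ j, g i j * x i * x j = 0} =
        {x : Fin 4 → ℝ | ∑ i, ∑ j, h i j * x i * x j = 0}) := by
    rintro ⟨l, hl, rfl⟩
    ext x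
    simp only [Set.mem_setOf_eq]
    have hq : ∑ i, ∑ j, (l • g) i j * x i * x j = l * ∑ i, ∑ j, g i j * x i * x j := by
      simp only [Matrix.smul_apply, smul_eq_mul, Fin.sum_univ_four]
      ring
    rw [hq, mul_eq_zero]
    simp [hl]
  have dir31 : ({x : Fin 4 → ℝ | ∑ i, ∑ j, g i j * x i * x j = 0} =
        {x : Fin 4 → ℝ | ∑ i, ∑ j, h i j * x i * x j = 0}) →
      (∃ l : ℝ, l ≠ 0 ∧ h = l • g) := by
    intro hS
    obtain ⟨P, hPdet, hPg⟩ := hgL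
    have hPtdet : IsUnit Pᵀ.det := by rwa [Matrix.det_transpose]
    have hrecover : ∀ M : Matrix (Fin 4) (Fin 4) ℝ, (Pᵀ)⁻¹ * (Pᵀ * M * P) * P⁻¹ = M := by
      intro M
      have h1 : (Pᵀ)⁻¹ * (Pᵀ * M) = M := by
        rw [← Matrix.mul_assoc, Matrix.nonsing_inv_mul _ hPtdet, Matrix.one_mul]
      calc (Pᵀ)⁻¹ * (Pᵀ * M * P) * P⁻¹ = ((Pᵀ)⁻¹ * (Pᵀ * M)) * (P * P⁻¹) := by
            simp only [Matrix.mul_assoc]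
        _ = M := by rw [h1, Matrix.mul_nonsing_inv _ hPdet, Matrix.mul_one]
    have hqm : ∀ y : Fin 4 → ℝ, (∑ i, ∑ j, (Pᵀ * g * P) i j * y i * y j) = 0 →
        (∑ i, ∑ j, (Pᵀ * h * P) i j * y i * y j) = 0 := by
      intro y hy
      rw [aux_qf_congr] at hy ⊢
      have hmem : P.mulVec y ∈ {x : Fin 4 → ℝ | ∑ i, ∑ j, g i j * x i * x j = 0} := hy
      rw [hS] at hmem
      exact hmem
    have hsymh' : (Pᵀ * h * P).IsSymm := by
      unfold Matrix.IsSymm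
      rw [Matrix.transpose_mul, Matrix.transpose_mul, Matrix.transpose_transpose, hh.eq,
        Matrix.mul_assoc]
    have hdiag1 : ∀ y : Fin 4 → ℝ,
        ∑ i, ∑ j, (Matrix.diagonal ![(1:ℝ), -1, -1, -1]) i j * y i * y j
          = y 0 ^ 2 - y 1 ^ 2 - y 2 ^ 2 - y 3 ^ 2 := by
      intro y
      norm_num [Fin.sum_univ_four, Matrix.diagonal, Matrix.cons_val_two, Matrix.cons_val_three]
      ring
    have hdiag2 : ∀ y : Fin 4 → ℝ,
        ∑ i, ∑ j, (Matrix.diagonal ![(-1:ℝ), 1, 1, 1]) i j * y i * y j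
          = -(y 0 ^ 2 - y 1 ^ 2 - y 2 ^ 2 - y 3 ^ 2) := by
      intro y
      norm_num [Fin.sum_univ_four, Matrix.diagonal, Matrix.cons_val_two, Matrix.cons_val_three]
      ring
    have hnull : ∀ y : Fin 4 → ℝ, y 0 ^ 2 = y 1 ^ 2 + y 2 ^ 2 + y 3 ^ 2 →
        ∑ i, ∑ j, (Pᵀ * h * P) i j * y i * y j = 0 := by
      intro y hy
      apply hqm
      rcases hPg with hD | hD
      · rw [hD, hdiag1]; linarith
      · rw [hD, hdiag2]; linarith
    have hstep := aux_nullcone_step (Pᵀ * h * P) hsymh' hnull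
    set c := (Pᵀ * h * P) 0 0 with hc_def
    have hcne : c ≠ 0 := by
      intro hz
      have hdet0 : (Pᵀ * h * P).det ≠ 0 := by
        rw [Matrix.det_mul, Matrix.det_mul]
        exact mul_ne_zero (mul_ne_zero (isUnit_iff_ne_zero.mp hPtdet)
          (isUnit_iff_ne_zero.mp hhdet)) (isUnit_iff_ne_zero.mp hPdet)
      have hzero : Pᵀ * h * P = 0 := by rw [hstep, hz, zero_smul]
      rw [hzero] at hdet0
      exact hdet0 Matrix.det_zero
    have hhform : h = c • ((Pᵀ)⁻¹ * Matrix.diagonal ![(1:ℝ), -1, -1, -1] * P⁻¹) := by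
      have := hrecover h
      rw [hstep] at this
      rw [← this, Matrix.mul_smul, Matrix.smul_mul]
    rcases hPg with hD | hD
    · refine ⟨c, hcne, ?_⟩
      have hgform : g = (Pᵀ)⁻¹ * Matrix.diagonal ![(1:ℝ), -1, -1, -1] * P⁻¹ := by
        rw [← hD, hrecover g]
      rw [hhform, ← hgform]
    · refine ⟨-c, neg_ne_zero.mpr hcne, ?_⟩
      have hgform : g = (Pᵀ)⁻¹ * Matrix.diagonal ![(-1:ℝ), 1, 1, 1] * P⁻¹ := by
        rw [← hD, hrecover g]
      have hneg : Matrix.diagonal ![(1:ℝ), -1, -1, -1]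
          = -(Matrix.diagonal ![(-1:ℝ), 1, 1, 1]) := by
        have hk4 : ∀ m : Fin 4, m = 0 ∨ m = 1 ∨ m = 2 ∨ m = 3 := by decide
        ext i j
        rcases hk4 i with rfl|rfl|rfl|rfl <;> rcases hk4 j with rfl|rfl|rfl|rfl <;>
          norm_num [Matrix.diagonal, Fin.ext_iff, Matrix.cons_val_two, Matrix.cons_val_three, show ((0:Fin 4):ℕ) = 0 from rfl,
            show ((1:Fin 4):ℕ) = 1 from rfl, show ((2:Fin 4):ℕ) = 2 from rfl,
            show ((3:Fin 4):ℕ) = 3 from rfl]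
      rw [hhform, hneg, Matrix.mul_neg, Matrix.neg_mul, smul_neg, ← neg_smul, ← hgform]
  exact ⟨⟨dir12, dir21⟩, dir13, dir31⟩


end
end
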